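/- arXiv:1401.6061 — 7 statements merged into one kernel-verified Lean document; each statement's English description precedes it below -/
import Mathlib

section
/- Let λ ≥ 2 and κ ≥ 1 be cardinal numbers. If D(λ,κ) holds (i.e., for every set A ⊆ ωλ the κ-board Gale–Stewart game GS_λ(A,κ) is determined), then B(λ,κ) holds: for every topological space X with π-weight π(X) ≤ λ such that the κ-th power X^κ with the box product topology is a Baire space, Black has a winning strategy in the Banach–Mazur game BM(X). -/
open Cardinal Set

namespace GamePaper

universe u

/-! ### Gale–Stewart style games.
A play is a sequence `p : ℕ → M`; player ONE (resp. White) moves at even indices,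
player TWO (resp. Black) at odd indices.  A strategy for a player is a function
assigning to the finite sequence of the opponent's prior moves the player's next move. -/

/-- ONE's moves in the play `p` are obtained from the strategy `σ` applied to the
list of TWO's prior moves. -/
def OneFollows {M : Type*} (σ : List M → M) (p : ℕ → M) : Prop :=
  ∀ n : ℕ, p (2 * n) = σ (List.ofFn fun i : Fin n => p (2 * (i : ℕ) + 1))

/-- TWO's moves in the play `p` are obtained from the strategy `σ` applied to the
list of ONE's prior moves. -/
def TwoFollows {M : Type*} (σ : List M → M) (p : ℕ → M) : Prop :=
  ∀ n : ℕ, p (2 * n + 1) = σ (List.ofFn fun i : Fin (n + 1) => p (2 * (i : ℕ)))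

/-- ONE has a winning strategy in the Gale–Stewart game `GS_Λ(A)`. -/
def OneWinsGS {Λ : Type*} (A : Set (ℕ → Λ)) : Prop :=
  ∃ σ : List Λ → Λ, ∀ p : ℕ → Λ, OneFollows σ p → p ∈ A

/-- TWO has a winning strategy in the Gale–Stewart game `GS_Λ(A)`. -/
def TwoWinsGS {Λ : Type*} (A : Set (ℕ → Λ)) : Prop :=
  ∃ σ : List Λ → Λ, ∀ p : ℕ → Λ, TwoFollows σ p → p ∉ A

/-- ONE has a winning strategy in the multiboard game `GS_Λ(A, K)`:
moves are functions `K → Λ`, and ONE wins a play if on some board `ξ` the induced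
play belongs to `A`. -/
def OneWinsGSBoards (Λ K : Type*) (A : Set (ℕ → Λ)) : Prop :=
  ∃ σ : List (K → Λ) → K → Λ, ∀ q : ℕ → K → Λ, OneFollows σ q →
    ∃ ξ : K, (fun n => q n ξ) ∈ A

/-- TWO has a winning strategy in the multiboard game `GS_Λ(A, K)`. -/
def TwoWinsGSBoards (Λ K : Type*) (A : Set (ℕ → Λ)) : Prop :=
  ∃ σ : List (K → Λ) → K → Λ, ∀ q : ℕ → K → Λ, TwoFollows σ q →
    ∀ ξ : K, (fun n => q n ξ) ∉ A

/-- The multiboard Gale–Stewart game `GS_Λ(A, K)` is determined. -/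
def GSBoardsDetermined (Λ K : Type*) (A : Set (ℕ → Λ)) : Prop :=
  OneWinsGSBoards Λ K A ∨ TwoWinsGSBoards Λ K A

/-- `D(λ, κ)` : every multiboard Gale–Stewart game on `κ` boards with moves in `λ`
is determined. -/
def DProp (Λ K : Type*) : Prop :=
  ∀ A : Set (ℕ → Λ), GSBoardsDetermined Λ K A

/-! ### Laver games -/

/-- ONE wins the play `q` of the Laver game `LG(Λ, K)`. -/
def LaverWin (Λ K : Type*) (q : ℕ → K → Λ) : Prop :=
  ∀ S : Set (ℕ → Λ), ¬ TwoWinsGS S → ∃ ξ : K, (fun n => q n ξ) ∈ S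

/-- `L(λ, κ)` : ONE has a winning strategy in the Laver game `LG(Λ, K)`. -/
def OneWinsLG (Λ K : Type*) : Prop :=
  ∃ σ : List (K → Λ) → K → Λ, ∀ q : ℕ → K → Λ, OneFollows σ q → LaverWin Λ K q

/-- TWO has a winning strategy in the Laver game `LG(Λ, K)`. -/
def TwoWinsLG (Λ K : Type*) : Prop :=
  ∃ σ : List (K → Λ) → K → Λ, ∀ q : ℕ → K → Λ, TwoFollows σ q → ¬ LaverWin Λ K q

/-! ### Ulam's cut-and-choose games `UG(λ, κ)`.
White first chooses `f 0 : K → Λ`; thereafter Black chooses `(ξ (2n), f (2n+1))` and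
White responds with `(ξ (2n+1), f (2n+2))`.  White wins iff for some `α : K`,
`f n α = ξ n` for all `n`. -/

/-- A strategy for White in `UG(Λ, K)`: a first move, and a response to each finite
sequence of Black's prior moves. -/
structure UGWhiteStrategy (Λ K : Type*) where
  first : K → Λ
  move : List (Λ × (K → Λ)) → Λ × (K → Λ)

/-- White's moves in the play `(ξ, f)` of `UG(Λ, K)` follow the strategy `σ`. -/
def UGWhiteFollows {Λ K : Type*} (σ : UGWhiteStrategy Λ K) (ξ : ℕ → Λ) (f : ℕ → K → Λ) :
    Prop :=
  f 0 = σ.first ∧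
  ∀ n : ℕ, (ξ (2 * n + 1), f (2 * n + 2)) =
    σ.move (List.ofFn fun i : Fin (n + 1) => (ξ (2 * (i : ℕ)), f (2 * (i : ℕ) + 1)))

/-- `U(λ, κ)` : White has a winning strategy in the cut-and-choose game `UG(Λ, K)`. -/
def WhiteWinsUG (Λ K : Type*) : Prop :=
  ∃ σ : UGWhiteStrategy Λ K, ∀ (ξ : ℕ → Λ) (f : ℕ → K → Λ),
    UGWhiteFollows σ ξ f → ∃ α : K, ∀ n : ℕ, f n α = ξ n

/-! ### Ideals and the game `G(J)` -/

/-- `J` is an ideal of subsets: nonempty, closed under binary unions and subsets. -/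
def IsIdeal {S : Type*} (J : Set (Set S)) : Prop :=
  J.Nonempty ∧ (∀ A B : Set S, A ∈ J → B ∈ J → A ∪ B ∈ J) ∧
    ∀ A B : Set S, B ∈ J → A ⊆ B → A ∈ J

/-- `J` is atomless: every `J`-positive set splits into two disjoint `J`-positive sets. -/
def IsAtomless {S : Type*} (J : Set (Set S)) : Prop :=
  ∀ X : Set S, X ∉ J → ∃ A B : Set S, A ∪ B = X ∧ Disjoint A B ∧ A ∉ J ∧ B ∉ J

/-- Legality of White's `n`-th move in the game `G(J)` (White plays `W n`,
Black plays `B n`). -/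
def GJWhiteLegal {S : Type*} (J : Set (Set S)) (W B : ℕ → Set S) : ℕ → Prop
  | 0 => W 0 ∉ J
  | n + 1 => W (n + 1) ∉ J ∧ W (n + 1) ⊆ B n

/-- Legality of Black's `n`-th move in the game `G(J)`. -/
def GJBlackLegal {S : Type*} (J : Set (Set S)) (W B : ℕ → Set S) (n : ℕ) : Prop :=
  B n ∉ J ∧ B n ⊆ W n

/-- Black has a winning strategy in the game `G(J)`: a strategy `τ` such that in any
play in which Black follows `τ`, Black's moves are legal as long as White's have been,
and if White always moves legally then `⋂ n, B n` is nonempty. -/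
def BlackWinsGJ {S : Type*} (J : Set (Set S)) : Prop :=
  ∃ τ : List (Set S) → Set S,
    ∀ W B : ℕ → Set S,
      (∀ n : ℕ, B n = τ (List.ofFn fun i : Fin (n + 1) => W (i : ℕ))) →
      (∀ n : ℕ, (∀ k ≤ n, GJWhiteLegal J W B k) → GJBlackLegal J W B n) ∧
      ((∀ n : ℕ, GJWhiteLegal J W B n) → (⋂ n, B n).Nonempty)

/-- The ideal `J` on `K` witnesses `I(λ, κ)`: it is a proper free ideal, `λ⁺`-complete,
every positive set has a partition into `λ` many disjoint positive sets, and there is a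
dense family in `J⁺` closed under countable descending intersections (nonempty). -/
def IdealWitness (Λ K : Type*) (J : Set (Set K)) : Prop :=
  IsIdeal J ∧ J ≠ Set.univ ∧ ⋃₀ J = Set.univ ∧
  (∀ A : Λ → Set K, (∀ i, A i ∈ J) → (⋃ i, A i) ∈ J) ∧
  (∀ X : Set K, X ∉ J → ∃ P : Λ → Set K, (⋃ i, P i) = X ∧
      (∀ i j : Λ, i ≠ j → Disjoint (P i) (P j)) ∧ ∀ i, P i ∉ J) ∧
  ∃ F : Set (Set K), (∀ Y ∈ F, Y ∉ J) ∧ (∀ X : Set K, X ∉ J → ∃ Y ∈ F, Y ⊆ X) ∧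
    ∀ Xs : ℕ → Set K, (∀ n, Xs n ∈ F) → (∀ n, Xs (n + 1) ⊆ Xs n) → (⋂ n, Xs n).Nonempty

/-- `I(λ, κ)` : some ideal on `K` witnesses the above. -/
def IProp (Λ K : Type*) : Prop := ∃ J : Set (Set K), IdealWitness Λ K J

/-! ### The Banach–Mazur game and box products -/

/-- Legality of White's `n`-th move in the Banach–Mazur game (White plays the sets of
even index of the play `p`). -/
def BMWhiteLegal {X : Type*} [TopologicalSpace X] (p : ℕ → Set X) : ℕ → Prop
  | 0 => IsOpen (p 0) ∧ (p 0).Nonempty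
  | n + 1 => IsOpen (p (2 * n + 2)) ∧ (p (2 * n + 2)).Nonempty ∧ p (2 * n + 2) ⊆ p (2 * n + 1)

/-- Legality of Black's `n`-th move in the Banach–Mazur game. -/
def BMBlackLegal {X : Type*} [TopologicalSpace X] (p : ℕ → Set X) (n : ℕ) : Prop :=
  IsOpen (p (2 * n + 1)) ∧ (p (2 * n + 1)).Nonempty ∧ p (2 * n + 1) ⊆ p (2 * n)

/-- Black has a winning strategy in the Banach–Mazur game `BM(X)`: a strategy `τ` such
that in any play where Black follows `τ`, Black's moves are legal as long as White's
have been, and if White always moves legally then the intersection of the play is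
nonempty. -/
def BlackWinsBM (X : Type*) [TopologicalSpace X] : Prop :=
  ∃ τ : List (Set X) → Set X,
    ∀ p : ℕ → Set X,
      (∀ n : ℕ, p (2 * n + 1) = τ (List.ofFn fun i : Fin (n + 1) => p (2 * (i : ℕ)))) →
      (∀ n : ℕ, (∀ k ≤ n, BMWhiteLegal p k) → BMBlackLegal p n) ∧
      ((∀ n : ℕ, BMWhiteLegal p n) → (⋂ n, p n).Nonempty)

/-- The box product topology on `ι → X`: generated by boxes `∏ i, U i` with all
`U i` open. -/
def boxTopology (ι X : Type*) [TopologicalSpace X] : TopologicalSpace (ι → X) :=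
  TopologicalSpace.generateFrom
    {S : Set (ι → X) | ∃ U : ι → Set X, (∀ i, IsOpen (U i)) ∧ S = Set.pi Set.univ U}

/-- `𝓑` is a π-base for `X`: a family of nonempty open sets such that every nonempty
open set contains a member of the family. -/
def IsPiBase (X : Type*) [TopologicalSpace X] (𝓑 : Set (Set X)) : Prop :=
  (∀ V ∈ 𝓑, IsOpen V ∧ V.Nonempty) ∧
    ∀ U : Set X, IsOpen U → U.Nonempty → ∃ V ∈ 𝓑, V ⊆ U

/-! ### Interlaced sets -/

/-- `A` and `B` are interlaced: both are infinite and for some `k` the increasing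
enumerations of `A \ k` and `B \ k` satisfy `a₀ < b₀ < a₁ < b₁ < ⋯`. -/
def Interlaced (A B : Set ℕ) : Prop :=
  A.Infinite ∧ B.Infinite ∧ ∃ k : ℕ, ∀ n : ℕ,
    Nat.nth (fun m => m ∈ A ∧ k ≤ m) n < Nat.nth (fun m => m ∈ B ∧ k ≤ m) n ∧
    Nat.nth (fun m => m ∈ B ∧ k ≤ m) n < Nat.nth (fun m => m ∈ A ∧ k ≤ m) (n + 1)

/-- `B(x) = {x(2n) + x(2n+1) : n < ω, x(2n) > 0}`. -/
def Bx (x : ℕ → ℕ) : Set ℕ :=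
  {m | ∃ n : ℕ, 0 < x (2 * n) ∧ m = x (2 * n) + x (2 * n + 1)}

/-- `Y(𝓑) = {x ∈ ωω : B(x) ∉ 𝓑}`. -/
def YFam (𝓑 : Set (Set ℕ)) : Set (ℕ → ℕ) := {x | Bx x ∉ 𝓑}

/-- `B^F_i = {F(2n)(i) + F(2n+1)(i) : n < ω, F(2n)(i) > 0}` for a play `F` of `G^ω`. -/
def BF (F : ℕ → ℕ → ℕ) (i : ℕ) : Set ℕ :=
  {m | ∃ n : ℕ, 0 < F (2 * n) i ∧ m = F (2 * n) i + F (2 * n + 1) i}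

/-- `D(A,B)` : `A` or `B` is finite, or for each `k` there are `a₁ < a₂ < a₃` in `A \ k`
with no element of `B` strictly between `a₁` and `a₃`. -/
def DRel (A B : Set ℕ) : Prop :=
  A.Finite ∨ B.Finite ∨ ∀ k : ℕ, ∃ a₁ a₂ a₃ : ℕ,
    a₁ ∈ A ∧ a₂ ∈ A ∧ a₃ ∈ A ∧ k ≤ a₁ ∧ a₁ < a₂ ∧ a₂ < a₃ ∧
    ¬ ∃ b ∈ B, a₁ < b ∧ b < a₃
/-! ### Auxiliary development for the proof of `statement_0`. -/

section AuxStatement0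

/-- The rule predicate: move `k+1` must shrink the `b`-coded open set. -/
def AuxRuleOK {Λ X : Type u} (b : Λ → Set X) (p : ℕ → Λ) : ℕ → Prop
  | 0 => True
  | (k+1) => b (p (k+1)) ⊆ b (p k)

lemma auxRuleOK_succ {Λ X : Type u} (b : Λ → Set X) (p : ℕ → Λ) (k : ℕ) :
    AuxRuleOK b p (k+1) = (b (p (k+1)) ⊆ b (p k)) := rfl

/-- The payoff set coding the Banach–Mazur game on `X` through codes in `Λ`. -/
def AuxASet {Λ X : Type u} (b : Λ → Set X) : Set (ℕ → Λ) :=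
  {p | (∃ n : ℕ, (∀ k ≤ 2*n, AuxRuleOK b p k) ∧ ¬ AuxRuleOK b p (2*n+1)) ∨
       ((∀ k, AuxRuleOK b p k) ∧ (⋂ n, b (p n)) = ∅)}

open Classical in
/-- Choice of a `b`-coded subset of `U`, when one exists. -/
noncomputable def auxPick {Λ X : Type u} [Nonempty Λ] (b : Λ → Set X) (U : Set X) : Λ :=
  if h : ∃ α, b α ⊆ U then h.choose else Classical.arbitrary Λ

lemma auxPick_spec {Λ X : Type u} [Nonempty Λ] (b : Λ → Set X) {U : Set X}
    (h : ∃ α, b α ⊆ U) : b (auxPick b U) ⊆ U := by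
  rw [auxPick, dif_pos h]; exact h.choose_spec

/-- If TWO wins the multiboard game then TWO wins the single-board game. -/
lemma auxTwoBoards_to_single {Λ K : Type u} [Nonempty K] (A : Set (ℕ → Λ))
    (h : TwoWinsGSBoards Λ K A) : TwoWinsGS A := by
  obtain ⟨σB, hσ⟩ := h
  refine ⟨fun l => σB (l.map fun a _ => a) (Classical.arbitrary K), ?_⟩
  intro p hp
  set q : ℕ → K → Λ := fun m =>
    if m % 2 = 0 then (fun _ => p m)
    else σB (List.ofFn fun i : Fin (m/2 + 1) => fun _ => p (2*(i:ℕ))) with hq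
  have hqe : ∀ n, q (2*n) = fun _ => p (2*n) := by
    intro n; simp only [hq]; rw [if_pos (by omega)]
  have hqo : ∀ n, q (2*n+1) =
      σB (List.ofFn fun i : Fin (n + 1) => fun _ => p (2*(i:ℕ))) := by
    intro n; simp only [hq]
    rw [if_neg (by omega), show (2*n+1)/2 = n from by omega]
  have hTwoF : TwoFollows σB q := by
    intro n
    rw [hqo n]
    refine congrArg σB (congrArg List.ofFn ?_)
    funext i
    exact (hqe i).symm
  have hres := hσ q hTwoF (Classical.arbitrary K)
  have hpq : (fun n => q n (Classical.arbitrary K)) = p := by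
    funext m
    rcases Nat.even_or_odd m with ⟨t, ht⟩ | ⟨t, ht⟩
    · rw [show m = 2*t from by omega, hqe]
    · rw [show m = 2*t+1 from by omega, hqo t, hp t]
      show σB (List.ofFn fun i : Fin (t+1) => fun _ => p (2*(i:ℕ))) _ =
        σB ((List.ofFn fun i : Fin (t+1) => p (2*(i:ℕ))).map fun a _ => a) _
      rw [List.map_ofFn]
      rfl
  rw [← hpq]
  exact hres

end AuxStatement0
section AuxStatement0B

variable {Λ X : Type u}

/-- Black's bookkeeping list: from the (reversed) list of White's moves, produce the
(reversed) list of simulated ONE-moves in the coded Gale–Stewart game. -/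
noncomputable def auxHlist [Nonempty Λ] (b : Λ → Set X) (τ : List Λ → Λ) :
    List (Set X) → List Λ
  | [] => []
  | [U] => [auxPick b U]
  | U :: V :: l =>
      auxPick b (U ∩ b (τ ((auxHlist b τ (V :: l)).reverse))) :: auxHlist b τ (V :: l)

lemma auxHlist_cons [Nonempty Λ] (b : Λ → Set X) (τ : List Λ → Λ) (U : Set X)
    {L : List (Set X)} (hL : L ≠ []) :
    auxHlist b τ (U :: L) =
      auxPick b (U ∩ b (τ ((auxHlist b τ L).reverse))) :: auxHlist b τ L := by
  cases L with
  | nil => exact absurd rfl hL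
  | cons V l => rfl

/-- The simulated ONE-move lists along a play `p` (only the even entries of `p` matter). -/
noncomputable def auxAl [Nonempty Λ] (b : Λ → Set X) (τ : List Λ → Λ) (p : ℕ → Set X)
    (n : ℕ) : List Λ :=
  auxHlist b τ (List.ofFn fun i : Fin (n+1) => p (2*(i:ℕ))).reverse

lemma auxAl_zero [Nonempty Λ] (b : Λ → Set X) (τ : List Λ → Λ) (p : ℕ → Set X) :
    auxAl b τ p 0 = [auxPick b (p 0)] := by
  simp [auxAl, auxHlist]

lemma auxEl_reverse (p : ℕ → Set X) (n : ℕ) :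
    (List.ofFn fun i : Fin (n+2) => p (2*(i:ℕ))).reverse =
      p (2*(n+1)) :: (List.ofFn fun i : Fin (n+1) => p (2*(i:ℕ))).reverse := by
  rw [List.ofFn_succ' (fun i : Fin (n+2) => p (2*(i:ℕ)))]
  simp [List.concat_eq_append]

lemma auxAl_succ [Nonempty Λ] (b : Λ → Set X) (τ : List Λ → Λ) (p : ℕ → Set X) (n : ℕ) :
    auxAl b τ p (n+1) =
      auxPick b (p (2*(n+1)) ∩ b (τ ((auxAl b τ p n).reverse))) :: auxAl b τ p n := by
  have hne : (List.ofFn fun i : Fin (n+1) => p (2*(i:ℕ))).reverse ≠ [] := by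
    intro h
    have := congrArg List.length h
    simp at this
  rw [auxAl, auxEl_reverse p n, auxHlist_cons b τ _ hne]
  rfl

/-- Black wins the Banach–Mazur game from a winning strategy of TWO in the coded
Gale–Stewart game. -/
lemma auxTwoGS_to_BM [TopologicalSpace X] [Nonempty Λ] (b : Λ → Set X)
    (hbO : ∀ α, IsOpen (b α)) (hbNe : ∀ α, (b α).Nonempty)
    (hbase : ∀ U : Set X, IsOpen U → U.Nonempty → ∃ α, b α ⊆ U)
    (h2 : TwoWinsGS (AuxASet b)) : BlackWinsBM X := by
  classical
  letI : Inhabited Λ := Classical.inhabited_of_nonempty ‹_›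
  obtain ⟨τ, hτ⟩ := h2
  refine ⟨fun l => b (τ ((auxHlist b τ l.reverse).reverse)), ?_⟩
  intro p hp
  -- the simulated play `q`
  set q : ℕ → Λ := fun m =>
    if m % 2 = 0 then (auxAl b τ p (m/2)).headI else τ ((auxAl b τ p (m/2)).reverse)
    with hqdef
  have hqo : ∀ n, q (2*n+1) = τ ((auxAl b τ p n).reverse) := by
    intro n; simp only [hqdef]
    rw [if_neg (by omega), show (2*n+1)/2 = n from by omega]
  have hq0 : q 0 = auxPick b (p 0) := by
    simp only [hqdef]
    rw [if_pos trivial, show (0:ℕ)/2 = 0 from rfl, auxAl_zero]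
    rfl
  have hqe : ∀ n, q (2*(n+1)) = auxPick b (p (2*(n+1)) ∩ b (q (2*n+1))) := by
    intro n; simp only [hqdef]
    rw [if_pos (by omega), if_neg (by omega),
      show (2*(n+1))/2 = n+1 from by omega, show (2*n+1)/2 = n from by omega,
      auxAl_succ]
    rfl
  -- the reversed move lists are the simulated plays
  have hrev : ∀ n, (auxAl b τ p n).reverse = List.ofFn fun i : Fin (n+1) => q (2*(i:ℕ)) := by
    intro n
    induction n with
    | zero =>
        rw [auxAl_zero]
        have h1 : (List.ofFn fun i : Fin 1 => q (2*(i:ℕ))) = [q 0] := by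
          simp
        rw [h1, hq0]
        rfl
    | succ m ih =>
        rw [auxAl_succ, List.reverse_cons, ih,
          List.ofFn_succ' (fun i : Fin (m+2) => q (2*(i:ℕ))), List.concat_eq_append]
        congr 1
        rw [Fin.val_last, hqe m, hqo m, ih]
  have hTwoF : TwoFollows τ q := by
    intro n
    rw [hqo n, hrev n]
  have hnotA : q ∉ AuxASet b := hτ q hTwoF
  -- identification of Black's actual moves
  have hpodd : ∀ n, p (2*n+1) = b (q (2*n+1)) := by
    intro n
    rw [hp n, hqo n]
    rfl
  -- ONE's simulated moves are legal whenever White has been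
  have hone : ∀ i, (∀ k ≤ i, BMWhiteLegal p k) →
      b (q (2*i)) ⊆ p (2*i) ∧ ∀ j, i = j + 1 → b (q (2*i)) ⊆ b (q (2*j+1)) := by
    intro i hW
    cases i with
    | zero =>
        have h0 := hW 0 le_rfl
        have hex : ∃ α, b α ⊆ p 0 := hbase (p 0) h0.1 h0.2
        constructor
        · rw [show 2*0 = 0 from by omega, hq0]
          exact auxPick_spec b hex
        · intro j hj
          exact absurd hj (by omega)
    | succ j =>
        have hWj := hW (j+1) le_rfl
        have hWo : IsOpen (p (2*j+2)) := hWj.1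
        have hWne : (p (2*j+2)).Nonempty := hWj.2.1
        have hWsub : p (2*j+2) ⊆ p (2*j+1) := hWj.2.2
        have h21 : p (2*j+1) = b (q (2*j+1)) := hpodd j
        have he : p (2*(j+1)) ∩ b (q (2*j+1)) = p (2*j+2) := by
          rw [show 2*(j+1) = 2*j+2 from by ring]
          exact Set.inter_eq_self_of_subset_left (h21 ▸ hWsub)
        have hex : ∃ α, b α ⊆ p (2*(j+1)) ∩ b (q (2*j+1)) := by
          rw [he]; exact hbase _ hWo hWne
        have hsub := auxPick_spec b hex
        rw [hqe j]
        constructor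
        · exact hsub.trans Set.inter_subset_left
        · intro j' hj'
          have hjj : j' = j := by omega
          subst hjj
          exact hsub.trans Set.inter_subset_right
  -- TWO's moves are legal whenever White has been
  have htwo : ∀ N, (∀ k ≤ N, BMWhiteLegal p k) → ∀ m ≤ N, b (q (2*m+1)) ⊆ b (q (2*m)) := by
    intro N hW m
    induction m using Nat.strong_induction_on with
    | _ m ih =>
      intro hmN
      by_contra hviol
      apply hnotA
      left
      refine ⟨m, ?_, ?_⟩
      · intro k hk
        rcases Nat.even_or_odd k with ⟨t, htk⟩ | ⟨t, htk⟩
        · have hk2 : k = 2*t := by omega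
          subst hk2
          cases t with
          | zero => exact trivial
          | succ s =>
              rw [show 2*(s+1) = (2*s+1)+1 from by ring, auxRuleOK_succ]
              rw [show 2*s+1+1 = 2*(s+1) from by ring]
              exact ((hone (s+1) (fun k' hk' => hW k' (le_trans hk' (by omega)))).2 s rfl)
        · have hk2 : k = 2*t+1 := by omega
          subst hk2
          rw [auxRuleOK_succ]
          exact ih t (by omega) (by omega)
      · rw [show 2*m+1 = (2*m)+1 from rfl, auxRuleOK_succ]
        exact hviol
  constructor
  · -- Black's moves are legal
    intro n hW
    refine ⟨?_, ?_, ?_⟩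
    · rw [hpodd n]; exact hbO _
    · rw [hpodd n]; exact hbNe _
    · rw [hpodd n]
      exact (htwo n hW n le_rfl).trans ((hone n (fun k hk => hW k hk)).1)
  · -- if White always legal, the intersection is nonempty
    intro hW
    have hall : ∀ k, AuxRuleOK b q k := by
      intro k
      rcases Nat.even_or_odd k with ⟨t, htk⟩ | ⟨t, htk⟩
      · have hk2 : k = 2*t := by omega
        subst hk2
        cases t with
        | zero => exact trivial
        | succ s =>
            rw [show 2*(s+1) = (2*s+1)+1 from by ring, auxRuleOK_succ]
            rw [show 2*s+1+1 = 2*(s+1) from by ring]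
            exact ((hone (s+1) (fun k' _ => hW k')).2 s rfl)
      · have hk2 : k = 2*t+1 := by omega
        subst hk2
        rw [auxRuleOK_succ]
        exact htwo t (fun k' _ => hW k') t le_rfl
    have hne : (⋂ n, b (q n)).Nonempty := by
      by_contra hempty
      exact hnotA (Or.inr ⟨hall, Set.not_nonempty_iff_eq_empty.mp hempty⟩)
    obtain ⟨x, hx⟩ := hne
    refine ⟨x, Set.mem_iInter.2 fun m => ?_⟩
    rcases Nat.even_or_odd m with ⟨t, htm⟩ | ⟨t, htm⟩
    · rw [show m = 2*t from by omega]
      exact (hone t (fun k _ => hW k)).1 (Set.mem_iInter.mp hx (2*t))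
    · rw [show m = 2*t+1 from by omega, hpodd t]
      exact Set.mem_iInter.mp hx (2*t+1)

end AuxStatement0B
section AuxStatement0C

/-- Type synonym carrying the box product topology. -/
def AuxBox (K X : Type u) [TopologicalSpace X] : Type u := K → X

instance AuxBox.topologicalSpace (K X : Type u) [TopologicalSpace X] :
    TopologicalSpace (AuxBox K X) := boxTopology K X

variable {K X : Type u} [TopologicalSpace X]

lemma auxIsOpen_box (U : K → Set X) (hU : ∀ ξ, IsOpen (U ξ)) :
    @IsOpen (AuxBox K X) _ (Set.pi Set.univ U) := by
  exact TopologicalSpace.GenerateOpen.basic _ ⟨U, hU, rfl⟩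

lemma auxExists_box_subset {O : Set (AuxBox K X)} (hO : IsOpen O) {x : AuxBox K X} :
    x ∈ O → ∃ U : K → Set X, (∀ ξ, IsOpen (U ξ)) ∧ (∀ ξ, x ξ ∈ U ξ) ∧
      (Set.pi Set.univ U : Set (AuxBox K X)) ⊆ O := by
  have hO' : TopologicalSpace.GenerateOpen
      {S : Set (K → X) | ∃ U : K → Set X, (∀ i, IsOpen (U i)) ∧ S = Set.pi Set.univ U} O := hO
  clear hO
  induction hO' with
  | basic s hs =>
      intro hx
      obtain ⟨U, hU, rfl⟩ := hs
      exact ⟨U, hU, fun ξ => hx ξ (Set.mem_univ ξ), subset_rfl⟩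
  | univ =>
      intro _
      exact ⟨fun _ => Set.univ, fun _ => isOpen_univ, fun _ => Set.mem_univ _,
        fun y _ => Set.mem_univ y⟩
  | inter s t hs ht IHs IHt =>
      intro hx
      obtain ⟨U, hU, hxU, hUs⟩ := IHs hx.1
      obtain ⟨V, hV, hxV, hVt⟩ := IHt hx.2
      refine ⟨fun ξ => U ξ ∩ V ξ, fun ξ => (hU ξ).inter (hV ξ), fun ξ => ⟨hxU ξ, hxV ξ⟩, ?_⟩
      rw [show (Set.pi Set.univ (fun ξ => U ξ ∩ V ξ) : Set (AuxBox K X)) =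
        Set.pi Set.univ U ∩ Set.pi Set.univ V from Set.pi_inter_distrib]
      exact Set.inter_subset_inter hUs hVt
  | sUnion S hS IH =>
      rintro ⟨t, htS, hxt⟩
      obtain ⟨U, hU, hxU, hsub⟩ := IH t htS hxt
      exact ⟨U, hU, hxU, hsub.trans (Set.subset_sUnion_of_mem htS)⟩

lemma auxPi_coord_subset {Y : Type v} {I : Type w} {U W : I → Set Y}
    (h : Set.pi Set.univ U ⊆ Set.pi Set.univ W) {x : I → Y} (hx : ∀ ξ, x ξ ∈ U ξ) (ξ : I) :
    U ξ ⊆ W ξ := by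
  classical
  intro y hy
  have hmem : Function.update x ξ y ∈ Set.pi Set.univ U := by
    intro ζ _
    rcases eq_or_ne ζ ξ with rfl | hne
    · simpa using hy
    · simpa [Function.update_of_ne hne] using hx ζ
  have := h hmem ξ (Set.mem_univ ξ)
  simpa using this

lemma auxExists_maxDisjoint {α : Type v} (S : Set (Set α)) :
    ∃ D, D ⊆ S ∧ (D.Pairwise fun s t => s ∩ t = ∅) ∧
      ∀ s ∈ S, (∀ t ∈ D, s ∩ t = ∅) → s ∈ D := by
  have hub : ∀ c ⊆ {T : Set (Set α) | T ⊆ S ∧ T.Pairwise fun s t => s ∩ t = ∅},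
      IsChain (· ⊆ ·) c →
      ∃ ub ∈ {T : Set (Set α) | T ⊆ S ∧ T.Pairwise fun s t => s ∩ t = ∅},
        ∀ s ∈ c, s ⊆ ub := by
    intro c hc hchain
    refine ⟨⋃₀ c, ⟨Set.sUnion_subset fun T hT => (hc hT).1, ?_⟩,
      fun s hs => Set.subset_sUnion_of_mem hs⟩
    rintro a ⟨Ta, hTa, haTa⟩ b ⟨Tb, hTb, hbTb⟩ hne
    rcases hchain.total hTa hTb with hsub | hsub
    · exact (hc hTb).2 (hsub haTa) hbTb hne
    · exact (hc hTa).2 haTa (hsub hbTb) hne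
  obtain ⟨D, hD⟩ := zorn_subset _ hub
  obtain ⟨⟨hDS, hDpw⟩, hmax⟩ := hD
  refine ⟨D, hDS, hDpw, fun s hs hdisj => ?_⟩
  have hins : insert s D ∈ {T : Set (Set α) | T ⊆ S ∧ T.Pairwise fun s t => s ∩ t = ∅} := by
    refine ⟨Set.insert_subset hs hDS, Set.pairwise_insert.2 ⟨hDpw, fun t ht _ => ?_⟩⟩
    exact ⟨hdisj t ht, by rw [Set.inter_comm]; exact hdisj t ht⟩
  exact hmax hins (Set.subset_insert s D) (Set.mem_insert s D)

open Classical in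
/-- The "corrected" version of a strategy for ONE: replace illegal moves by the
previous move of TWO on each board. -/
noncomputable def auxCorr {Λ K : Type u} (b : Λ → Set X) (σ : List (K → Λ) → K → Λ)
    (l : List (K → Λ)) (ξ : K) : Λ :=
  if h : l = [] then σ [] ξ
  else if b (σ l ξ) ⊆ b (l.getLast h ξ) then σ l ξ else l.getLast h ξ

omit [TopologicalSpace X] in
lemma auxCorr_nil {Λ K : Type u} (b : Λ → Set X) (σ : List (K → Λ) → K → Λ) (ξ : K) :
    auxCorr b σ [] ξ = σ [] ξ := by
  rw [auxCorr, dif_pos rfl]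

omit [TopologicalSpace X] in
lemma auxCorr_sub {Λ K : Type u} (b : Λ → Set X) (σ : List (K → Λ) → K → Λ)
    {l : List (K → Λ)} (h : l ≠ []) (ξ : K) :
    b (auxCorr b σ l ξ) ⊆ b (l.getLast h ξ) := by
  rw [auxCorr, dif_neg h]
  split
  · assumption
  · exact subset_rfl

omit [TopologicalSpace X] in
lemma auxCorr_eq {Λ K : Type u} (b : Λ → Set X) (σ : List (K → Λ) → K → Λ)
    {l : List (K → Λ)} (h : l ≠ []) (ξ : K)
    (hleg : b (σ l ξ) ⊆ b (l.getLast h ξ)) : auxCorr b σ l ξ = σ l ξ := by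
  rw [auxCorr, dif_neg h, if_pos hleg]

end AuxStatement0C
section AuxStatement0D

variable {Λ K X : Type u} [TopologicalSpace X]

lemma auxGetLast_append {α : Type v} (l : List α) (g : α) (h : l ++ [g] ≠ []) :
    (l ++ [g]).getLast h = g := List.getLast_concat

/-- White's moves (as boxes) along the corrected strategy. -/
noncomputable def auxRb (b : Λ → Set X) (σ : List (K → Λ) → K → Λ) (l : List (K → Λ)) :
    Set (AuxBox K X) :=
  Set.pi Set.univ fun ξ => b (auxCorr b σ l ξ)

/-- Legality of a TWO-move after position `l`. -/
def auxLeg (b : Λ → Set X) (σ : List (K → Λ) → K → Λ) (l : List (K → Λ)) (g : K → Λ) :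
    Prop :=
  ∀ ξ, b (g ξ) ⊆ b (auxCorr b σ l ξ)

lemma auxCorr_eq_append (b : Λ → Set X) (σ : List (K → Λ) → K → Λ)
    (l : List (K → Λ)) (g : K → Λ) (ξ : K)
    (hleg : b (σ (l ++ [g]) ξ) ⊆ b (g ξ)) :
    auxCorr b σ (l ++ [g]) ξ = σ (l ++ [g]) ξ := by
  refine auxCorr_eq b σ (by simp) ξ ?_
  rw [auxGetLast_append]
  exact hleg

lemma auxRb_append_subset (b : Λ → Set X) (σ : List (K → Λ) → K → Λ)
    (l : List (K → Λ)) (g : K → Λ) :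
    auxRb b σ (l ++ [g]) ⊆ Set.pi Set.univ fun ξ => b (g ξ) := by
  refine Set.pi_mono fun ξ _ => ?_
  have hne : l ++ [g] ≠ [] := by simp
  have h := auxCorr_sub b σ hne ξ
  rwa [auxGetLast_append] at h

lemma auxRb_child_subset (b : Λ → Set X) (σ : List (K → Λ) → K → Λ)
    {l : List (K → Λ)} {g : K → Λ} (hleg : auxLeg b σ l g) :
    auxRb b σ (l ++ [g]) ⊆ auxRb b σ l :=
  (auxRb_append_subset b σ l g).trans (Set.pi_mono fun ξ _ => hleg ξ)

/-- A maximal pairwise disjoint family of White responses after position `l`. -/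
noncomputable def auxDfam (b : Λ → Set X) (σ : List (K → Λ) → K → Λ) (l : List (K → Λ)) :
    Set (Set (AuxBox K X)) :=
  (auxExists_maxDisjoint
    {M | ∃ g, auxLeg b σ l g ∧ M = auxRb b σ (l ++ [g])}).choose

lemma auxDfam_spec (b : Λ → Set X) (σ : List (K → Λ) → K → Λ) (l : List (K → Λ)) :
    auxDfam b σ l ⊆ {M | ∃ g, auxLeg b σ l g ∧ M = auxRb b σ (l ++ [g])} ∧
    ((auxDfam b σ l).Pairwise fun s t => s ∩ t = ∅) ∧
    ∀ s ∈ {M | ∃ g, auxLeg b σ l g ∧ M = auxRb b σ (l ++ [g])},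
      (∀ t ∈ auxDfam b σ l, s ∩ t = ∅) → s ∈ auxDfam b σ l :=
  (auxExists_maxDisjoint _).choose_spec

open Classical in
/-- A TWO-move generating a given member of the family. -/
noncomputable def auxGOf [Nonempty Λ] (b : Λ → Set X) (σ : List (K → Λ) → K → Λ)
    (l : List (K → Λ)) (M : Set (AuxBox K X)) : K → Λ :=
  if h : ∃ g, auxLeg b σ l g ∧ M = auxRb b σ (l ++ [g]) then h.choose
  else Classical.arbitrary _

lemma auxGOf_spec [Nonempty Λ] (b : Λ → Set X) (σ : List (K → Λ) → K → Λ)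
    (l : List (K → Λ)) (M : Set (AuxBox K X))
    (h : ∃ g, auxLeg b σ l g ∧ M = auxRb b σ (l ++ [g])) :
    auxLeg b σ l (auxGOf b σ l M) ∧ auxRb b σ (l ++ [auxGOf b σ l M]) = M := by
  rw [auxGOf, dif_pos h]
  exact ⟨h.choose_spec.1, h.choose_spec.2.symm⟩

/-- The tree of positions. -/
noncomputable def auxPos [Nonempty Λ] (b : Λ → Set X) (σ : List (K → Λ) → K → Λ) :
    ℕ → Set (List (K → Λ))
  | 0 => {[]}
  | (n+1) => {l' | ∃ l ∈ auxPos b σ n, ∃ M ∈ auxDfam b σ l, l' = l ++ [auxGOf b σ l M]}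

lemma auxPos_zero [Nonempty Λ] (b : Λ → Set X) (σ : List (K → Λ) → K → Λ) :
    auxPos b σ 0 = {[]} := rfl

lemma auxPos_succ [Nonempty Λ] (b : Λ → Set X) (σ : List (K → Λ) → K → Λ) (n : ℕ) :
    auxPos b σ (n+1) =
      {l' | ∃ l ∈ auxPos b σ n, ∃ M ∈ auxDfam b σ l, l' = l ++ [auxGOf b σ l M]} := rfl

end AuxStatement0D
section AuxStatement0E

variable {Λ K X : Type u} [TopologicalSpace X]

lemma auxOneBoards_false [Nonempty Λ] (b : Λ → Set X)
    (hbO : ∀ α, IsOpen (b α)) (hbNe : ∀ α, (b α).Nonempty)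
    (hbase : ∀ U : Set X, IsOpen U → U.Nonempty → ∃ α, b α ⊆ U)
    (h1 : OneWinsGSBoards Λ K (AuxASet b))
    (hBaire : BaireSpace (AuxBox K X)) : False := by
  classical
  obtain ⟨σ, hwin⟩ := h1
  have hRopen : ∀ l : List (K → Λ), IsOpen (auxRb b σ l) :=
    fun l => auxIsOpen_box _ (fun ξ => hbO _)
  have hRne : ∀ l : List (K → Λ), (auxRb b σ l).Nonempty :=
    fun l => Set.univ_pi_nonempty_iff.2 fun ξ => hbNe _
  -- density of each maximal disjoint family below its position
  have hdense : ∀ (l : List (K → Λ)) (O : Set (AuxBox K X)), IsOpen O → O.Nonempty →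
      O ⊆ auxRb b σ l → ∃ M ∈ auxDfam b σ l, (M ∩ O).Nonempty := by
    intro l O hOopen hOne hOR
    obtain ⟨x, hx⟩ := hOne
    obtain ⟨U, hUo, hxU, hUO⟩ := auxExists_box_subset hOopen hx
    have hUne : ∀ ξ, (U ξ).Nonempty := fun ξ => ⟨x ξ, hxU ξ⟩
    have hUsub : ∀ ξ, U ξ ⊆ b (auxCorr b σ l ξ) :=
      auxPi_coord_subset (hUO.trans hOR) hxU
    choose g hg using fun ξ => hbase (U ξ) (hUo ξ) (hUne ξ)
    have hLegg : auxLeg b σ l g := fun ξ => (hg ξ).trans (hUsub ξ)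
    have hMS : auxRb b σ (l ++ [g]) ∈
        {M | ∃ g', auxLeg b σ l g' ∧ M = auxRb b σ (l ++ [g'])} := ⟨g, hLegg, rfl⟩
    have hsubO : auxRb b σ (l ++ [g]) ⊆ O :=
      (auxRb_append_subset b σ l g).trans ((Set.pi_mono fun ξ _ => hg ξ).trans hUO)
    have hCne := hRne (l ++ [g])
    by_cases hmem : auxRb b σ (l ++ [g]) ∈ auxDfam b σ l
    · exact ⟨_, hmem, hCne.choose, hCne.choose_spec, hsubO hCne.choose_spec⟩
    · have hnotall : ¬ ∀ t ∈ auxDfam b σ l, auxRb b σ (l ++ [g]) ∩ t = ∅ := by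
        intro hall
        exact hmem ((auxDfam_spec b σ l).2.2 _ hMS hall)
      push_neg at hnotall
      obtain ⟨t, htD, htne⟩ := hnotall
      obtain ⟨y, hy1, hy2⟩ := htne
      exact ⟨t, htD, y, hy2, hsubO hy1⟩
  -- members of the families
  have hmemD : ∀ (l : List (K → Λ)) (M : Set (AuxBox K X)), M ∈ auxDfam b σ l →
      auxLeg b σ l (auxGOf b σ l M) ∧ auxRb b σ (l ++ [auxGOf b σ l M]) = M :=
    fun l M hM => auxGOf_spec b σ l M ((auxDfam_spec b σ l).1 hM)
  -- levels of the tree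
  set DD : ℕ → Set (AuxBox K X) := fun n => ⋃ l ∈ auxPos b σ n, auxRb b σ l with hDD
  have hDopen : ∀ n, IsOpen (DD n) := fun n => isOpen_biUnion fun l _ => hRopen l
  have hdenseU0 : ∀ n (O : Set (AuxBox K X)), IsOpen O → O.Nonempty →
      O ⊆ auxRb b σ [] → (O ∩ DD n).Nonempty := by
    intro n
    induction n with
    | zero =>
        intro O hOopen hOne hOR
        obtain ⟨z, hz⟩ := hOne
        refine ⟨z, hz, ?_⟩
        simp only [hDD]
        exact Set.mem_biUnion (show ([] : List (K → Λ)) ∈ auxPos b σ 0 from rfl) (hOR hz)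
    | succ m ih =>
        intro O hOopen hOne hOR
        obtain ⟨y, hyO, hyD⟩ := ih O hOopen hOne hOR
        simp only [hDD] at hyD
        obtain ⟨l, hl, hyR⟩ := Set.mem_iUnion₂.mp hyD
        have hO'open : IsOpen (O ∩ auxRb b σ l) := hOopen.inter (hRopen l)
        have hO'ne : (O ∩ auxRb b σ l).Nonempty := ⟨y, hyO, hyR⟩
        obtain ⟨M, hM, z, hzM, hzO'⟩ :=
          hdense l (O ∩ auxRb b σ l) hO'open hO'ne Set.inter_subset_right
        refine ⟨z, hzO'.1, ?_⟩
        simp only [hDD]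
        refine Set.mem_biUnion (?_ : l ++ [auxGOf b σ l M] ∈ auxPos b σ (m+1)) ?_
        · rw [auxPos_succ]
          exact ⟨l, hl, M, hM, rfl⟩
        · rw [(hmemD l M hM).2]
          exact hzM
  -- the dense open sets
  set GG : ℕ → Set (AuxBox K X) :=
    fun n => DD n ∪ (closure (auxRb b σ []))ᶜ with hGG
  have hGopen : ∀ n, IsOpen (GG n) := fun n => (hDopen n).union isClosed_closure.isOpen_compl
  have hGdense : ∀ n, Dense (GG n) := by
    intro n
    rw [dense_iff_inter_open]
    intro O hOopen hOne
    by_cases hcase : (O ∩ auxRb b σ []).Nonempty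
    · obtain ⟨w, hw, hwD⟩ :=
        hdenseU0 n (O ∩ auxRb b σ []) (hOopen.inter (hRopen [])) hcase
          Set.inter_subset_right
      exact ⟨w, hw.1, Or.inl hwD⟩
    · obtain ⟨z, hz⟩ := hOne
      refine ⟨z, hz, Or.inr fun hzc => ?_⟩
      have hsub := hOopen.inter_closure (t := auxRb b σ []) ⟨hz, hzc⟩
      rw [Set.not_nonempty_iff_eq_empty.mp hcase, closure_empty] at hsub
      exact hsub
  -- apply Baireness
  have hdint : Dense (⋂ n, GG n) := dense_iInter_of_isOpen_nat hGopen hGdense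
  obtain ⟨x, hxU0, hxG⟩ :=
    (dense_iff_inter_open.mp hdint) (auxRb b σ []) (hRopen []) (hRne [])
  have hxD : ∀ n, ∃ l, l ∈ auxPos b σ n ∧ x ∈ auxRb b σ l := by
    intro n
    have hxGn : x ∈ DD n ∪ (closure (auxRb b σ []))ᶜ := Set.mem_iInter.mp hxG n
    rcases hxGn with hD | hc
    · simp only [hDD] at hD
      obtain ⟨l, hl, hx⟩ := Set.mem_iUnion₂.mp hD
      exact ⟨l, hl, hx⟩
    · exact absurd (subset_closure hxU0) hc
  -- disjointness of the levels
  have hdisj : ∀ n, ∀ l ∈ auxPos b σ n, ∀ l' ∈ auxPos b σ n,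
      (auxRb b σ l ∩ auxRb b σ l').Nonempty → l = l' := by
    intro n
    induction n with
    | zero =>
        intro l hl l' hl' _
        rw [Set.mem_singleton_iff.mp hl, Set.mem_singleton_iff.mp hl']
    | succ m ih =>
        intro l hl l' hl' hint
        rw [auxPos_succ] at hl hl'
        obtain ⟨l₀, hl₀, M, hM, rfl⟩ := hl
        obtain ⟨l₀', hl₀', M', hM', rfl⟩ := hl'
        obtain ⟨y, hyl, hyl'⟩ := hint
        obtain ⟨hleg, hRbM⟩ := hmemD l₀ M hM
        obtain ⟨hleg', hRbM'⟩ := hmemD l₀' M' hM'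
        have hy₀ : y ∈ auxRb b σ l₀ := auxRb_child_subset b σ hleg hyl
        have hy₀' : y ∈ auxRb b σ l₀' := auxRb_child_subset b σ hleg' hyl'
        have he : l₀ = l₀' := ih l₀ hl₀ l₀' hl₀' ⟨y, hy₀, hy₀'⟩
        subst he
        have hMM' : M = M' := by
          by_contra hne
          have hd := (auxDfam_spec b σ l₀).2.1 hM hM' hne
          have hy : y ∈ M ∩ M' := ⟨hRbM ▸ hyl, hRbM' ▸ hyl'⟩
          rw [hd] at hy
          exact hy
        rw [hMM']
  -- the branch through `x`
  have hLmem : ∀ n, (hxD n).choose ∈ auxPos b σ n := fun n => (hxD n).choose_spec.1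
  have hLx : ∀ n, x ∈ auxRb b σ ((hxD n).choose) := fun n => (hxD n).choose_spec.2
  set L : ℕ → List (K → Λ) := fun n => (hxD n).choose with hLdef
  have hL0 : L 0 = [] := Set.mem_singleton_iff.mp (hLmem 0)
  have hstep : ∀ n, ∃ g, auxLeg b σ (L n) g ∧ L (n+1) = L n ++ [g] := by
    intro n
    have hmem : L (n+1) ∈ {l' | ∃ l ∈ auxPos b σ n,
        ∃ M ∈ auxDfam b σ l, l' = l ++ [auxGOf b σ l M]} := hLmem (n+1)
    obtain ⟨l₀, hl₀, M, hM, hLe⟩ := hmem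
    obtain ⟨hleg, hRbM⟩ := hmemD l₀ M hM
    have hx1 : x ∈ auxRb b σ (L (n+1)) := hLx (n+1)
    have hxl₀ : x ∈ auxRb b σ l₀ := by
      have hsub : auxRb b σ (L (n+1)) ⊆ auxRb b σ l₀ := by
        rw [show L (n+1) = l₀ ++ [auxGOf b σ l₀ M] from hLe]
        exact auxRb_child_subset b σ hleg
      exact hsub hx1
    have hl₀L : l₀ = L n := hdisj n l₀ hl₀ (L n) (hLmem n) ⟨x, hxl₀, hLx n⟩
    subst hl₀L
    exact ⟨_, hleg, hLe⟩
  set gs : ℕ → K → Λ := fun n => (hstep n).choose with hgs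
  have hgleg : ∀ n, auxLeg b σ (L n) (gs n) := fun n => (hstep n).choose_spec.1
  have hLsucc : ∀ n, L (n+1) = L n ++ [gs n] := fun n => (hstep n).choose_spec.2
  have hLofFn : ∀ n, L n = List.ofFn fun i : Fin n => gs (i : ℕ) := by
    intro n
    induction n with
    | zero => rw [hL0]; simp
    | succ m ih =>
        rw [hLsucc m, ih, List.ofFn_succ' (fun i : Fin (m+1) => gs (i : ℕ)),
          List.concat_eq_append]
  -- the simulated play
  set q : ℕ → K → Λ := fun m =>
    if m % 2 = 0 then σ (List.ofFn fun i : Fin (m/2) => gs (i : ℕ)) else gs (m/2) with hq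
  have hqe : ∀ n, q (2*n) = σ (L n) := by
    intro n
    simp only [hq]
    rw [if_pos (by omega), show (2*n)/2 = n from by omega, ← hLofFn n]
  have hqo : ∀ n, q (2*n+1) = gs n := by
    intro n
    simp only [hq]
    rw [if_neg (by omega), show (2*n+1)/2 = n from by omega]
  have hOneF : OneFollows σ q := by
    intro n
    rw [hqe n, hLofFn n]
    refine congrArg σ (congrArg List.ofFn ?_)
    funext i
    exact (hqo (i : ℕ)).symm
  obtain ⟨ξ, hA⟩ := hwin q hOneF
  -- corrected moves agree with actual moves whenever the actual move was legal
  have hcorr : ∀ n, b (σ (L (n+1)) ξ) ⊆ b (gs n ξ) →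
      auxCorr b σ (L (n+1)) ξ = σ (L (n+1)) ξ := by
    intro n hleg
    rw [hLsucc n] at hleg ⊢
    exact auxCorr_eq_append b σ _ _ ξ hleg
  have hcorr0 : auxCorr b σ (L 0) ξ = σ (L 0) ξ := by
    rw [hL0]
    exact auxCorr_nil b σ ξ
  rcases hA with ⟨n, hpre, hviol⟩ | ⟨hall, hemp⟩
  · -- TWO never violates the rules
    rw [auxRuleOK_succ] at hviol
    apply hviol
    show b (q (2*n+1) ξ) ⊆ b (q (2*n) ξ)
    rw [hqo n, hqe n]
    have hl := hgleg n ξ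
    have hco : auxCorr b σ (L n) ξ = σ (L n) ξ := by
      cases n with
      | zero => exact hcorr0
      | succ m =>
          refine hcorr m ?_
          have hp2 := hpre (2*(m+1)) le_rfl
          rw [show 2*(m+1) = (2*m+1)+1 from by ring, auxRuleOK_succ] at hp2
          have hp2' : b (q ((2*m+1)+1) ξ) ⊆ b (q (2*m+1) ξ) := hp2
          rw [show (2*m+1)+1 = 2*(m+1) from by ring, hqe (m+1), hqo m] at hp2'
          exact hp2'
    rw [hco] at hl
    exact hl
  · -- all moves legal on the winning board, yet the intersection contains `x ξ`
    have hcoall : ∀ n, auxCorr b σ (L n) ξ = σ (L n) ξ := by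
      intro n
      cases n with
      | zero => exact hcorr0
      | succ m =>
          refine hcorr m ?_
          have hp2 := hall (2*(m+1))
          rw [show 2*(m+1) = (2*m+1)+1 from by ring, auxRuleOK_succ] at hp2
          have hp2' : b (q ((2*m+1)+1) ξ) ⊆ b (q (2*m+1) ξ) := hp2
          rw [show (2*m+1)+1 = 2*(m+1) from by ring, hqe (m+1), hqo m] at hp2'
          exact hp2'
    have hxe : ∀ n, x ξ ∈ b (q (2*n) ξ) := by
      intro n
      have hmem : x ξ ∈ b (auxCorr b σ (L n) ξ) := hLx n ξ (Set.mem_univ ξ)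
      rw [hcoall n] at hmem
      rw [hqe n]
      exact hmem
    have hxo : ∀ n, x ξ ∈ b (q (2*n+1) ξ) := by
      intro n
      have hp2 := hall (2*(n+1))
      rw [show 2*(n+1) = (2*n+1)+1 from by ring, auxRuleOK_succ] at hp2
      have hp2' : b (q ((2*n+1)+1) ξ) ⊆ b (q (2*n+1) ξ) := hp2
      apply hp2'
      have hx1 := hxe (n+1)
      rw [show (2*n+1)+1 = 2*(n+1) from by ring]
      exact hx1
    have hmem : x ξ ∈ ⋂ m, b (q m ξ) := by
      refine Set.mem_iInter.2 fun m => ?_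
      rcases Nat.even_or_odd m with ⟨t, htm⟩ | ⟨t, htm⟩
      · rw [show m = 2*t from by omega]
        exact hxe t
      · rw [show m = 2*t+1 from by omega]
        exact hxo t
    have hemp' : (⋂ m, b (q m ξ)) = ∅ := hemp
    rw [hemp'] at hmem
    exact hmem

end AuxStatement0E

/-- Theorem (paper Thm 4): `D(λ,κ)` implies `B(λ,κ)`.  If every multiboard Gale–Stewart
game on `κ` boards with moves in `λ` is determined, then for every topological space `X`
of π-weight at most `λ` whose box power `X^κ` is Baire, Black has a winning strategy in
the Banach–Mazur game on `X`. -/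
theorem statement_0 (Λ K : Type u) (hΛ : 2 ≤ #Λ) (hK : 1 ≤ #K) (hD : DProp Λ K)
    (X : Type u) [TopologicalSpace X]
    (hπ : ∃ 𝓑 : Set (Set X), IsPiBase X 𝓑 ∧ #𝓑 ≤ #Λ)
    (hBaire : @BaireSpace (K → X) (boxTopology K X)) :
    BlackWinsBM X := by
  rcases isEmpty_or_nonempty X with hE | hNe
  · refine ⟨fun _ => ∅, fun p _ => ⟨fun n hleg => ?_, fun hleg => ?_⟩⟩
    · obtain ⟨x, -⟩ := (hleg 0 (Nat.zero_le n)).2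
      exact hE.elim x
    · obtain ⟨x, -⟩ := (hleg 0).2
      exact hE.elim x
  · obtain ⟨𝓑, hPi, hcard⟩ := hπ
    haveI hΛne : Nonempty Λ := Cardinal.mk_ne_zero_iff.mp (Cardinal.one_le_iff_ne_zero.mp (le_trans one_le_two hΛ))
    haveI hKne : Nonempty K := Cardinal.mk_ne_zero_iff.mp (Cardinal.one_le_iff_ne_zero.mp hK)
    obtain ⟨V₀, hV₀mem, -⟩ := hPi.2 Set.univ isOpen_univ Set.univ_nonempty
    haveI : Nonempty ↥𝓑 := ⟨⟨V₀, hV₀mem⟩⟩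
    obtain ⟨f⟩ := (Cardinal.le_def _ _).mp hcard
    set b : Λ → Set X := fun α => ((Function.invFun f α : ↥𝓑) : Set X) with hb
    have hbmem : ∀ α, b α ∈ 𝓑 := fun α => (Function.invFun f α).2
    have hbO : ∀ α, IsOpen (b α) := fun α => (hPi.1 _ (hbmem α)).1
    have hbNe : ∀ α, (b α).Nonempty := fun α => (hPi.1 _ (hbmem α)).2
    have hbase : ∀ U : Set X, IsOpen U → U.Nonempty → ∃ α, b α ⊆ U := by
      intro U hU hUne
      obtain ⟨V, hV𝓑, hVU⟩ := hPi.2 U hU hUne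
      refine ⟨f ⟨V, hV𝓑⟩, ?_⟩
      have h1 : Function.invFun f (f ⟨V, hV𝓑⟩) = ⟨V, hV𝓑⟩ :=
        Function.leftInverse_invFun f.injective _
      simp only [hb, h1]
      exact hVU
    have hBaire' : BaireSpace (AuxBox K X) := hBaire
    rcases hD (AuxASet b) with h1 | h2
    · exact (auxOneBoards_false b hbO hbNe hbase h1 hBaire').elim
    · exact auxTwoGS_to_BM b hbO hbNe hbase (auxTwoBoards_to_single _ h2)

end GamePaper
end

section
/- Let λ ≥ 2 and κ ≥ 1 be cardinals, let (f_n : n < ω) be a sequence of functions κ → λ, and set Y = {(f_n(ξ) : n < ω) : ξ < κ}. The following are equivalent: (a) for every S ⊆ ωλ such that TWO does not have a winning strategy in GS_λ(S), there exists ξ < κ such that (f_n(ξ) : n < ω) ∈ S; (b) TWO has a winning strategy in GS_λ(ωλ \ Y); (c) there is a strategy σ for TWO in the game structure GS_λ (the winning condition being unspecified) such that every play in which TWO follows σ belongs to Y. -/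
open Cardinal Set

namespace GamePaper

universe u

/-- Lemma (paper Lemma 5): for a sequence `f` of moves and
`Y = {(f n ξ)_n : ξ : K}`, the three conditions (a), (b), (c) are equivalent. -/
theorem statement_1 (Λ K : Type u) (hΛ : 2 ≤ #Λ) (hK : 1 ≤ #K)
    (f : ℕ → K → Λ) (Y : Set (ℕ → Λ))
    (hY : Y = {p : ℕ → Λ | ∃ ξ : K, p = fun n => f n ξ}) :
    ((∀ S : Set (ℕ → Λ), ¬ TwoWinsGS S → ∃ ξ : K, (fun n => f n ξ) ∈ S) ↔
      TwoWinsGS Yᶜ) ∧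
    (TwoWinsGS Yᶜ ↔
      ∃ σ : List Λ → Λ, ∀ p : ℕ → Λ, TwoFollows σ p → p ∈ Y) := by
  constructor
  · constructor
    · intro ha
      by_contra hb
      obtain ⟨ξ, hξ⟩ := ha Yᶜ hb
      exact hξ (by rw [hY]; exact ⟨ξ, rfl⟩)
    · rintro ⟨σ, hσ⟩ S hS
      by_contra h
      push_neg at h
      apply hS
      refine ⟨σ, fun p hp hpS => ?_⟩
      have hpY : p ∈ Y := Set.not_notMem.mp (hσ p hp)
      rw [hY] at hpY
      obtain ⟨ξ, rfl⟩ := hpY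
      exact h ξ hpS
  · simp [TwoWinsGS]

end GamePaper
end

section
/- For all cardinal numbers λ ≥ 2 and κ ≥ 1, L(λ,κ) implies D(λ,κ): if ONE has a winning strategy in the Laver game LG(λ,κ), then for every set A ⊆ ωλ the κ-board Gale–Stewart game GS_λ(A,κ) is determined. -/
open Cardinal Set

namespace GamePaper

universe u

/-- Theorem (paper Thm 7): `L(λ,κ)` implies `D(λ,κ)`. -/
theorem statement_2 (Λ K : Type u) (hΛ : 2 ≤ #Λ) (hK : 1 ≤ #K)
    (hL : OneWinsLG Λ K) : DProp Λ K := by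
  intro A
  by_cases hA : TwoWinsGS A
  · right
    obtain ⟨τ, hτ⟩ := hA
    refine ⟨fun l ξ => τ (l.map (fun f => f ξ)), fun q hq ξ => ?_⟩
    apply hτ
    intro n
    have := congrFun (hq n) ξ
    simpa [List.map_ofFn, Function.comp_def] using this
  · left
    obtain ⟨σ, hσ⟩ := hL
    exact ⟨σ, fun q hq => hσ q hq A hA⟩

end GamePaper
end

section
/- For all cardinal numbers λ ≥ 2 and κ ≥ 1: if D(λ,κ) holds, then L(λ, 2^(λ^ℵ0) · κ) holds; that is, if every κ-board Gale–Stewart game GS_λ(A,κ) with A ⊆ ωλ is determined, then ONE has a winning strategy in the Laver game LG(λ, 2^(λ^ℵ0) · κ). -/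
open Cardinal Set

namespace GamePaper

universe u

lemma twoBoards_to_two {Λ K : Type*} [Nonempty K] (S : Set (ℕ → Λ))
    (h : TwoWinsGSBoards Λ K S) : TwoWinsGS S := by
  classical
  obtain ⟨σ, hσ⟩ := h
  obtain ⟨ξ₀⟩ := ‹Nonempty K›
  refine ⟨fun L => σ (L.map fun a _ => a) ξ₀, ?_⟩
  intro p hp
  set d : ℕ → K → Λ := fun m =>
    σ (List.ofFn fun i : Fin (m + 1) => fun _ => p (2 * (i : ℕ))) with hd
  set q : ℕ → K → Λ := fun n =>
    if Even n then (fun _ => p n) else d (n / 2) with hqdef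
  have h3 : ∀ m : ℕ, q (2 * m) = fun _ => p (2 * m) := by
    intro m
    have : Even (2 * m) := ⟨m, by ring⟩
    simp [hqdef, this]
  have h4 : ∀ n : ℕ, q (2 * n + 1) = d n := by
    intro n
    have h1 : ¬ Even (2 * n + 1) := by simp [Nat.even_iff]
    have h2 : (2 * n + 1) / 2 = n := by omega
    simp [hqdef, h1, h2]
  have hq : TwoFollows σ q := by
    intro n
    rw [h4 n]
    simp only [h3, hd]
  have hqξ : ∀ n, q n ξ₀ = p n := by
    intro n
    rcases Nat.even_or_odd n with he | ⟨m, hm⟩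
    · simp [hqdef, if_pos he]
    · subst hm
      have hpm := hp m
      rw [show 2 * m + 1 = 2 * m + 1 from rfl, h4 m, hd]
      rw [hpm]
      simp only [List.map_ofFn]
      rfl
  have hnot := hσ q hq ξ₀
  have heq : (fun n => q n ξ₀) = p := funext hqξ
  rwa [heq] at hnot

/-- Theorem (paper Thm 8): `D(λ,κ)` implies `L(λ, 2^(λ^ℵ₀) · κ)`. -/
theorem statement_3 (Λ K K' : Type u) (hΛ : 2 ≤ #Λ) (hK : 1 ≤ #K)
    (hK' : #K' = 2 ^ ((#Λ) ^ (ℵ₀ : Cardinal.{u})) * #K)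
    (hD : DProp Λ K) : OneWinsLG Λ K' := by
  classical
  haveI hΛne : Nonempty Λ := Cardinal.mk_ne_zero_iff.mp (Cardinal.one_le_iff_ne_zero.mp (le_trans one_le_two hΛ))
  haveI hKne : Nonempty K := Cardinal.mk_ne_zero_iff.mp (Cardinal.one_le_iff_ne_zero.mp hK)
  -- for every set S such that TWO does not win GS(S), ONE wins the multiboard game
  have hone : ∀ s : {S : Set (ℕ → Λ) // ¬ TwoWinsGS S}, OneWinsGSBoards Λ K s.1 := by
    intro s
    rcases hD s.1 with h | h
    · exact h
    · exact absurd (twoBoards_to_two s.1 h) s.2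
  choose σs hσs using hone
  -- an embedding of pairs into K'
  have hcard : #({S : Set (ℕ → Λ) // ¬ TwoWinsGS S} × K) ≤ #K' := by
    rw [hK', Cardinal.mk_prod, Cardinal.lift_id, Cardinal.lift_id]
    have h1 : #{S : Set (ℕ → Λ) // ¬ TwoWinsGS S} ≤
        2 ^ ((#Λ) ^ (ℵ₀ : Cardinal.{u})) := by
      calc #{S : Set (ℕ → Λ) // ¬ TwoWinsGS S} ≤ #(Set (ℕ → Λ)) :=
            Cardinal.mk_subtype_le _
        _ = 2 ^ #(ℕ → Λ) := Cardinal.mk_set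
        _ = 2 ^ ((#Λ) ^ (ℵ₀ : Cardinal.{u})) := by
            rw [Cardinal.mk_arrow]; simp
    exact mul_le_mul' h1 le_rfl
  obtain ⟨e⟩ := Cardinal.le_def _ _ |>.mp hcard
  -- ONE's strategy in the Laver game: run σs s on the boards indexed by s
  refine ⟨fun L η =>
    (Function.partialInv e η).elim (Classical.arbitrary Λ)
      (fun p => σs p.1 (L.map fun g ξ' => g (e (p.1, ξ'))) p.2), ?_⟩
  intro q hq S hS
  set s : {S : Set (ℕ → Λ) // ¬ TwoWinsGS S} := ⟨S, hS⟩ with hs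
  set qS : ℕ → K → Λ := fun n ξ => q n (e (s, ξ)) with hqS
  have hfol : OneFollows (σs s) qS := by
    intro n
    funext ξ
    have h1 : qS (2 * n) ξ = q (2 * n) (e (s, ξ)) := rfl
    rw [h1, hq n]
    have h2 : Function.partialInv e (e (s, ξ)) = some (s, ξ) :=
      Function.partialInv_left e.injective (s, ξ)
    simp only [h2, Option.elim_some, List.map_ofFn]
    rfl
  obtain ⟨ξ, hξ⟩ := hσs s qS hfol
  exact ⟨e (s, ξ), hξ⟩

end GamePaper
end

section
/- For all cardinals λ ≥ 2 and κ ≥ 1, U(λ,κ) implies L(λ,κ): if White has a winning strategy in the cut-and-choose game UG(λ,κ), then ONE has a winning strategy in the Laver game LG(λ,κ). -/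
open Cardinal Set

namespace GamePaper

universe u

section LaverAux

variable {Λ K : Type*}

/-- White's even `f`-moves along the strategy tree. -/
def fE (σU : UGWhiteStrategy Λ K) (g : ℕ → K → Λ) (n : ℕ) (u : ℕ → Λ) : K → Λ :=
  if n = 0 then σU.first else (σU.move (List.ofFn fun i : Fin n => (u i, g i))).2

def xv (σU : UGWhiteStrategy Λ K) (g : ℕ → K → Λ) (n : ℕ) (u : ℕ → Λ) : Λ :=
  (σU.move (List.ofFn fun i : Fin (n + 1) => (u i, g i))).1

def Bset (σU : UGWhiteStrategy Λ K) (g : ℕ → K → Λ) (n : ℕ) (u : ℕ → Λ) : Set K :=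
  {α | ∀ i < n, fE σU g i u α = u i ∧ g i α = xv σU g i u}

theorem fE_congr (σU : UGWhiteStrategy Λ K) {g g' : ℕ → K → Λ} {u u' : ℕ → Λ} {n : ℕ}
    (hg : ∀ i < n, g i = g' i) (hu : ∀ i < n, u i = u' i) :
    fE σU g n u = fE σU g' n u' := by
  unfold fE
  split
  · rfl
  · exact congrArg (fun L => (σU.move L).2)
      (congrArg List.ofFn (funext fun i => by rw [hg i i.2, hu i i.2]))

theorem xv_congr (σU : UGWhiteStrategy Λ K) {g g' : ℕ → K → Λ} {u u' : ℕ → Λ} {n : ℕ}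
    (hg : ∀ i < n + 1, g i = g' i) (hu : ∀ i < n + 1, u i = u' i) :
    xv σU g n u = xv σU g' n u' := by
  unfold xv
  exact congrArg (fun L => (σU.move L).1)
    (congrArg List.ofFn (funext fun i => by rw [hg i i.2, hu i i.2]))

theorem Bset_congr (σU : UGWhiteStrategy Λ K) {g g' : ℕ → K → Λ} {u : ℕ → Λ} {n : ℕ}
    (hg : ∀ i < n, g i = g' i) :
    Bset σU g n u = Bset σU g' n u := by
  unfold Bset
  ext α
  constructor <;> intro h i hi <;> obtain ⟨h1, h2⟩ := h i hi
  · refine ⟨?_, ?_⟩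
    · rw [← fE_congr σU (fun j hj => hg j (hj.trans hi)) (fun _ _ => rfl)]; exact h1
    · rw [← hg i hi, h2,
        xv_congr σU (fun j hj => hg j (by omega)) (fun _ _ => rfl)]
  · refine ⟨?_, ?_⟩
    · rw [fE_congr σU (fun j hj => hg j (hj.trans hi)) (fun _ _ => rfl)]; exact h1
    · rw [hg i hi, h2, ← xv_congr σU (fun j hj => hg j (by omega)) (fun _ _ => rfl)]

theorem Bset_uniq (σU : UGWhiteStrategy Λ K) {g : ℕ → K → Λ} {u u' : ℕ → Λ} {n : ℕ}
    {α : K} (h : α ∈ Bset σU g n u) (h' : α ∈ Bset σU g n u') :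
    ∀ i < n, u i = u' i := by
  intro i hi
  induction i using Nat.strong_induction_on with
  | _ i ih =>
    have h1 := (h i hi).1
    have h1' := (h' i hi).1
    have : fE σU g i u = fE σU g i u' :=
      fE_congr σU (fun _ _ => rfl) (fun j hj => ih j hj (by omega))
    rw [this, h1'] at h1
    exact h1.symm

open scoped Classical in
/-- ONE's strategy in the Laver game constructed from White's UG strategy. -/
noncomputable def oneStrat (σU : UGWhiteStrategy Λ K) (j : Λ) (l : List (K → Λ)) : K → Λ :=
  fun α =>
    if h : ∃ u : ℕ → Λ, α ∈ Bset σU (fun i => l.getD i fun _ => j) l.length u then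
      fE σU (fun i => l.getD i fun _ => j) l.length h.choose α
    else j

end LaverAux

/-- Theorem (paper Thm 11): `U(λ,κ)` implies `L(λ,κ)`. -/
theorem statement_6 (Λ K : Type u) (hΛ : 2 ≤ #Λ) (hK : 1 ≤ #K)
    (hU : WhiteWinsUG Λ K) : OneWinsLG Λ K := by
  obtain ⟨σU, hσU⟩ := hU
  obtain ⟨j, -, -⟩ := Cardinal.two_le_iff.mp hΛ
  refine ⟨oneStrat σU j, ?_⟩
  intro q hq S hS
  -- TWO's moves in the Laver game
  set g : ℕ → K → Λ := fun i => q (2 * i + 1) with hg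
  -- TWO's Gale-Stewart strategy built from the play
  set τ : List Λ → Λ := fun l => xv σU g (l.length - 1) (fun i => l.getD i j) with hτ
  have h2 : ¬ ∀ p : ℕ → Λ, TwoFollows τ p → p ∉ S := fun h => hS ⟨τ, h⟩
  push_neg at h2
  obtain ⟨p, hpτ, hpS⟩ := h2
  set u : ℕ → Λ := fun n => p (2 * n) with hu
  -- p's odd entries are the xv values
  have hpodd : ∀ n : ℕ, p (2 * n + 1) = xv σU g n u := by
    intro n
    rw [hpτ n, hτ]
    simp only [List.length_ofFn]
    have : n + 1 - 1 = n := by omega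
    rw [this]
    refine xv_congr σU (fun _ _ => rfl) (fun i hi => ?_)
    rw [List.getD_eq_getElem _ _ (by simpa using hi), List.getElem_ofFn]
  -- the simulated UG play
  set f : ℕ → K → Λ := fun m => if m % 2 = 1 then g (m / 2) else fE σU g (m / 2) u with hf
  have hf_even : ∀ n : ℕ, f (2 * n) = fE σU g n u := by
    intro n
    have h1 : (2 * n) % 2 = 0 := by omega
    have h2 : (2 * n) / 2 = n := by omega
    simp [hf, h1, h2]
  have hf_odd : ∀ n : ℕ, f (2 * n + 1) = g n := by
    intro n
    have h1 : (2 * n + 1) % 2 = 1 := by omega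
    have h2 : (2 * n + 1) / 2 = n := by omega
    simp [hf, h1, h2]
  have hfollows : UGWhiteFollows σU p f := by
    constructor
    · have := hf_even 0
      simpa [fE] using this
    · intro n
      have hlist : (List.ofFn fun i : Fin (n + 1) => (p (2 * (i : ℕ)), f (2 * (i : ℕ) + 1)))
          = List.ofFn fun i : Fin (n + 1) => (u (i : ℕ), g (i : ℕ)) := by
        refine congrArg List.ofFn (funext fun i => ?_)
        rw [hf_odd]
      rw [hlist]
      have he : f (2 * n + 2) = fE σU g (n + 1) u := by
        have : 2 * n + 2 = 2 * (n + 1) := by omega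
        rw [this, hf_even]
      rw [he, hpodd n]
      have : fE σU g (n + 1) u
          = (σU.move (List.ofFn fun i : Fin (n + 1) => (u (i : ℕ), g (i : ℕ)))).2 := by
        simp [fE]
      rw [this, xv]
  obtain ⟨α, hα⟩ := hσU p f hfollows
  -- the winner lies in every survival set along u
  have hBmem : ∀ n : ℕ, α ∈ Bset σU g n u := by
    intro n i hi
    refine ⟨?_, ?_⟩
    · rw [← hf_even i]; exact hα (2 * i)
    · rw [← hpodd i, ← hα (2 * i + 1), hf_odd]
  refine ⟨α, ?_⟩
  have hqp : (fun n => q n α) = p := by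
    funext m
    rcases Nat.even_or_odd m with ⟨n, hn⟩ | ⟨n, hn⟩
    · obtain rfl : m = 2 * n := by omega
      show q (2 * n) α = p (2 * n)
      rw [hq n]
      set l : List (K → Λ) := List.ofFn fun i : Fin n => q (2 * (i : ℕ) + 1) with hl
      have hlen : l.length = n := by simp [hl]
      have hgl : ∀ i < l.length, (fun i => l.getD i fun _ => j) i = g i := by
        rw [hlen]
        intro i hi
        simp only
        rw [List.getD_eq_getElem _ _ (by simpa [hlen] using hi), List.getElem_ofFn]
      have hmem : α ∈ Bset σU (fun i => l.getD i fun _ => j) l.length u := by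
        rw [Bset_congr σU hgl, hlen]
        exact hBmem n
      have hex : ∃ u' : ℕ → Λ, α ∈ Bset σU (fun i => l.getD i fun _ => j) l.length u' :=
        ⟨u, hmem⟩
      obtain ⟨u0, hu0spec, hval0⟩ : ∃ u0 : ℕ → Λ,
          α ∈ Bset σU (fun i => l.getD i fun _ => j) l.length u0 ∧
          oneStrat σU j l α = fE σU (fun i => l.getD i fun _ => j) l.length u0 α :=
        ⟨hex.choose, hex.choose_spec, by simp only [oneStrat]; rw [dif_pos hex]⟩
      have h1 : α ∈ Bset σU g l.length u0 := by
        rwa [Bset_congr σU hgl] at hu0spec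
      rw [hlen] at h1
      have huniq : ∀ i < l.length, u0 i = u i := by
        rw [hlen]; exact Bset_uniq σU h1 (hBmem n)
      calc oneStrat σU j l α
          = fE σU (fun i => l.getD i fun _ => j) l.length u0 α := hval0
        _ = fE σU g l.length u α := congrFun (fE_congr σU hgl huniq) α
        _ = fE σU g n u α := by rw [hlen]
        _ = f (2 * n) α := (congrFun (hf_even n) α).symm
        _ = p (2 * n) := hα (2 * n)
    · obtain rfl : m = 2 * n + 1 := by omega
      show q (2 * n + 1) α = p (2 * n + 1)
      exact (congrFun (hf_odd n) α).symm.trans (hα (2 * n + 1))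
  rw [hqp]
  exact hpS


end GamePaper
end

section
/- If White has a winning strategy in the cut-and-choose game UG(2,κ), then κ > 2^ℵ0. -/
open Cardinal Set

namespace GamePaper

universe u

/-! ### Auxiliary results used in the proof of Theorem 12 -/

abbrev CantorSp : Type := ℕ → Fin 2

lemma mk_cantorSp : #CantorSp = continuum := by
  rw [show CantorSp = (ℕ → Fin 2) from rfl, ← Cardinal.power_def, Cardinal.mk_fin,
    Cardinal.mk_nat, Nat.cast_ofNat, Cardinal.two_power_aleph0]

noncomputable def flip0 (v : CantorSp) : CantorSp := fun n => if n = 0 then 1 - v 0 else v n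

lemma flip0_ne (v : CantorSp) : flip0 v ≠ v := by
  have key : ∀ a : Fin 2, 1 - a ≠ a := by decide
  intro h
  have h0 : flip0 v 0 = v 0 := congrFun h 0
  simp only [flip0, if_pos rfl] at h0
  exact key (v 0) h0

/-- The index well-order. -/
abbrev OO : Type := (Cardinal.continuum.{0}).ord.ToType

/-- System of distinct representatives for ≤ 𝔠 many sets each of size ≥ 𝔠. -/
lemma exists_sdr {ι : Type} (S : ι → Set CantorSp) (hι : #ι ≤ continuum)
    (hS : ∀ i, continuum ≤ #(S i)) :
    ∃ r : ι → CantorSp, (∀ i, r i ∈ S i) ∧ Function.Injective r := by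
  classical
  haveI : IsWellOrder OO (· < ·) := isWellOrder_lt
  have hmkO : #(OO) = continuum := by
    rw [Cardinal.mk_toType, Cardinal.card_ord]
  obtain ⟨emb⟩ : Nonempty (ι ↪ OO) := by
    rw [← Cardinal.le_def, hmkO]; exact hι
  let T : OO → Set CantorSp :=
    fun j => if h : ∃ i, emb i = j then S h.choose else univ
  have hT : ∀ j, continuum ≤ #(T j) := by
    intro j
    by_cases h : ∃ i, emb i = j
    · simp only [T, dif_pos h]; exact hS _
    · simp only [T, dif_neg h, Cardinal.mk_univ, mk_cantorSp, le_refl]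
  have hsmall : ∀ j : OO, #{k // k < j} < continuum := by
    intro j
    have h1 : Ordinal.typein ((· < ·) : OO → _ → Prop) j < (Cardinal.continuum.{0}).ord := by
      have := Ordinal.typein_lt_type ((· < ·) : OO → _ → Prop) j
      rwa [Ordinal.type_toType] at this
    have h2 := Ordinal.card_typein (r := ((· < ·) : OO → _ → Prop)) j
    have h3 : (Ordinal.typein ((· < ·) : OO → _ → Prop) j).card < Cardinal.continuum.{0} :=
      (Cardinal.lt_ord).mp h1
    rwa [h2] at h3
  have key : ∀ (j : OO) (G : ∀ k, k < j → CantorSp),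
      (T j \ {z | ∃ k, ∃ hk : k < j, G k hk = z}).Nonempty := by
    intro j G
    by_contra hne
    have hsub : T j ⊆ {z | ∃ k, ∃ hk : k < j, G k hk = z} :=
      Set.diff_eq_empty.mp (Set.not_nonempty_iff_eq_empty.mp hne)
    have hsur : Function.Surjective
        (fun k : {k // k < j} => (⟨G k.1 k.2, ⟨k.1, k.2, rfl⟩⟩ :
          {z | ∃ k, ∃ hk : k < j, G k hk = z})) := by
      rintro ⟨z, k, hk, hz⟩
      exact ⟨⟨k, hk⟩, Subtype.ext hz⟩
    have : #(T j) ≤ #{k // k < j} :=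
      le_trans (Cardinal.mk_le_mk_of_subset hsub) (Cardinal.mk_le_of_surjective hsur)
    exact absurd (lt_of_le_of_lt (le_trans (hT j) this) (hsmall j)) (lt_irrefl _)
  have wf : WellFounded ((· < ·) : OO → _ → Prop) := wellFounded_lt
  let g : OO → CantorSp := wf.fix (fun j ih => (key j ih).some)
  have hg : ∀ j, g j ∈ T j \ {z | ∃ k, ∃ hk : k < j, g k = z} := by
    intro j
    have heq : g j = (key j (fun k _ => g k)).some := wf.fix_eq _ j
    rw [heq]
    exact (key j (fun k _ => g k)).some_mem
  refine ⟨fun i => g (emb i), ?_, ?_⟩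
  · intro i
    have h : ∃ i', emb i' = emb i := ⟨i, rfl⟩
    have hch : h.choose = i := emb.injective h.choose_spec
    have := (hg (emb i)).1
    simpa only [T, dif_pos h, hch] using this
  · intro i i' hii
    by_contra hne
    have hemb : emb i ≠ emb i' := fun h => hne (emb.injective h)
    rcases lt_trichotomy (emb i) (emb i') with h | h | h
    · exact (hg (emb i')).2 ⟨emb i, h, hii⟩
    · exact hemb h
    · exact (hg (emb i)).2 ⟨emb i', h, hii.symm⟩

lemma card_continuous_le :
    #{F : CantorSp → CantorSp // Continuous F} ≤ continuum := by
  classical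
  obtain ⟨D, hDc, hDd⟩ := TopologicalSpace.exists_countable_dense CantorSp
  have : Countable D := hDc.to_subtype
  have hinj : Function.Injective
      (fun F : {F : CantorSp → CantorSp // Continuous F} => (fun d : D => F.1 d)) := by
    intro F G h
    apply Subtype.ext
    apply Continuous.ext_on hDd F.2 G.2
    intro z hz
    exact congrFun h ⟨z, hz⟩
  calc #{F : CantorSp → CantorSp // Continuous F} ≤ #(D → CantorSp) :=
        Cardinal.mk_le_of_injective hinj
    _ = #CantorSp ^ #D := (Cardinal.power_def _ _).symm
    _ ≤ continuum ^ ℵ₀ := by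
        rw [mk_cantorSp]
        exact Cardinal.power_le_power_left Cardinal.continuum_ne_zero Cardinal.mk_le_aleph0
    _ = continuum := Cardinal.continuum_power_aleph0

lemma exists_wild : ∃ u : CantorSp → CantorSp,
    ∀ Φ Ψ : CantorSp → CantorSp, Continuous Φ → Function.Injective Φ → Continuous Ψ →
      ∃ x, Ψ x ≠ u (Φ x) := by
  classical
  let P := {p : (CantorSp → CantorSp) × (CantorSp → CantorSp) //
      Continuous p.1 ∧ Function.Injective p.1 ∧ Continuous p.2}
  have hP : #P ≤ continuum := by
    have hinj : Function.Injective (fun p : P =>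
        ((⟨p.1.1, p.2.1⟩ : {F : CantorSp → CantorSp // Continuous F}),
         (⟨p.1.2, p.2.2.2⟩ : {F : CantorSp → CantorSp // Continuous F}))) := by
      intro p q h
      apply Subtype.ext
      have h1 := congrArg Prod.fst h
      have h2 := congrArg Prod.snd h
      simp only [Subtype.mk.injEq] at h1 h2
      exact Prod.ext h1 h2
    calc #P ≤ #({F : CantorSp → CantorSp // Continuous F} ×
          {F : CantorSp → CantorSp // Continuous F}) := Cardinal.mk_le_of_injective hinj
      _ = #{F : CantorSp → CantorSp // Continuous F} *
          #{F : CantorSp → CantorSp // Continuous F} := by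
            simp [Cardinal.mk_prod]
      _ ≤ continuum * continuum :=
            mul_le_mul' card_continuous_le card_continuous_le
      _ = continuum := Cardinal.mul_eq_self Cardinal.aleph0_le_continuum
  have hS : ∀ p : P, continuum ≤ #(Set.range p.1.1) := by
    intro p
    rw [Cardinal.mk_range_eq _ p.2.2.1, mk_cantorSp]
  obtain ⟨r, hrmem, hrinj⟩ := exists_sdr (fun p : P => Set.range p.1.1) hP hS
  let u : CantorSp → CantorSp := fun z =>
    if h : ∃ p : P, r p = z then flip0 (h.choose.1.2 (hrmem h.choose).choose)
    else (fun _ => 0)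
  refine ⟨u, ?_⟩
  intro Φ Ψ hΦc hΦi hΨc
  set p₀ : P := ⟨(Φ, Ψ), hΦc, hΦi, hΨc⟩ with hp₀
  refine ⟨(hrmem p₀).choose, ?_⟩
  have hx : Φ (hrmem p₀).choose = r p₀ := (hrmem p₀).choose_spec
  have h : ∃ p : P, r p = r p₀ := ⟨p₀, rfl⟩
  have hch : h.choose = p₀ := hrinj h.choose_spec
  have hu : u (r p₀) = flip0 (h.choose.1.2 (hrmem h.choose).choose) := by
    simp only [u]
    rw [dif_pos h]
  rw [hx, hu, hch]
  intro hcontra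
  exact flip0_ne (Ψ (hrmem p₀).choose) hcontra.symm


/-! ### Auxiliary definitions for the proof of `statement_7` -/

/-- White's responses (as given by the strategy `σ`) against the Black play whose
`m`-th move is the bit `x m` together with the fixed "coder" function `h m`. -/
noncomputable def Rfun {K : Type u} (σ : UGWhiteStrategy (Fin 2) K) (h : ℕ → K → Fin 2)
    (x : CantorSp) (m : ℕ) : Fin 2 × (K → Fin 2) :=
  σ.move (List.ofFn fun i : Fin (m + 1) => (x (i : ℕ), h (i : ℕ)))

/-- The full sequence of chosen elements in the play against Black's moves `(x m, h m)`. -/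
noncomputable def ξfun {K : Type u} (σ : UGWhiteStrategy (Fin 2) K) (h : ℕ → K → Fin 2)
    (x : CantorSp) (n : ℕ) : Fin 2 :=
  if n % 2 = 0 then x (n / 2) else (Rfun σ h x (n / 2)).1

/-- The full sequence of functions in the play against Black's moves `(x m, h m)`. -/
noncomputable def ffun {K : Type u} (σ : UGWhiteStrategy (Fin 2) K) (h : ℕ → K → Fin 2)
    (x : CantorSp) (n : ℕ) : K → Fin 2 :=
  if n = 0 then σ.first else if n % 2 = 0 then (Rfun σ h x (n / 2 - 1)).2 else h (n / 2)

theorem statement_7_aux {K : Type u} (σ : UGWhiteStrategy (Fin 2) K)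
    (hσ : ∀ (ξ : ℕ → Fin 2) (f : ℕ → K → Fin 2),
      UGWhiteFollows σ ξ f → ∃ α : K, ∀ n : ℕ, f n α = ξ n)
    (e : K → CantorSp) (einj : Function.Injective e) : False := by
  classical
  obtain ⟨u, hu⟩ := exists_wild
  -- Black's coder functions: even stages code `e`, odd stages code `u ∘ e`.
  set h : ℕ → K → Fin 2 := fun m a => if m % 2 = 0 then e a (m / 2) else u (e a) (m / 2)
    with hdef
  have hRcongr : ∀ (x y : CantorSp) (m : ℕ), (∀ i, i ≤ m → x i = y i) →
      Rfun σ h x m = Rfun σ h y m := by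
    intro x y m hxy
    unfold Rfun
    refine congrArg σ.move (congrArg List.ofFn (funext fun i => ?_))
    rw [hxy (i : ℕ) (Nat.lt_succ_iff.mp i.2)]
  have hfollows : ∀ x, UGWhiteFollows σ (ξfun σ h x) (ffun σ h x) := by
    intro x
    constructor
    · simp [ffun]
    · intro n
      have e1 : ξfun σ h x (2 * n + 1) = (Rfun σ h x n).1 := by
        have h1 : ¬((2 * n + 1) % 2 = 0) := by omega
        have h2 : (2 * n + 1) / 2 = n := by omega
        simp [ξfun, h1, h2]
      have e2 : ffun σ h x (2 * n + 2) = (Rfun σ h x n).2 := by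
        have h0 : ¬(2 * n + 2 = 0) := by omega
        have h1 : (2 * n + 2) % 2 = 0 := by omega
        have h2 : (2 * n + 2) / 2 - 1 = n := by omega
        simp [ffun, h0, h1, h2]
      have e3 : (List.ofFn fun i : Fin (n + 1) =>
            (ξfun σ h x (2 * (i : ℕ)), ffun σ h x (2 * (i : ℕ) + 1)))
          = List.ofFn fun i : Fin (n + 1) => (x (i : ℕ), h (i : ℕ)) := by
        congr 1
        funext i
        have h1 : (2 * (i : ℕ)) % 2 = 0 := by omega
        have h2 : (2 * (i : ℕ)) / 2 = (i : ℕ) := by omega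
        have h3 : ¬(2 * (i : ℕ) + 1 = 0) := by omega
        have h4 : ¬((2 * (i : ℕ) + 1) % 2 = 0) := by omega
        have h5 : (2 * (i : ℕ) + 1) / 2 = (i : ℕ) := by omega
        simp [ξfun, ffun, h1, h2, h3, h4, h5]
      rw [e1, e2, e3, Prod.mk.eta]
      rfl
  choose Θ hΘ using fun x => hσ (ξfun σ h x) (ffun σ h x) (hfollows x)
  -- the winner realizes Black's bits on White's functions
  have hbit : ∀ x n, ffun σ h x (2 * n) (Θ x) = x n := by
    intro x n
    rw [hΘ x (2 * n)]
    have h1 : (2 * n) % 2 = 0 := by omega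
    have h2 : (2 * n) / 2 = n := by omega
    simp [ξfun, h1, h2]
  -- the winner's `e`-code is White's sequence of declarations at stages `4k+1`
  have hE : ∀ x k, e (Θ x) k = (Rfun σ h x (2 * k)).1 := by
    intro x k
    have hθ := hΘ x (2 * (2 * k) + 1)
    have h3 : ¬(2 * (2 * k) + 1 = 0) := by omega
    have h4 : ¬((2 * (2 * k) + 1) % 2 = 0) := by omega
    have h5 : (2 * (2 * k) + 1) / 2 = 2 * k := by omega
    have h6 : (2 * k) % 2 = 0 := by omega
    have h7 : (2 * k) / 2 = k := by omega
    simp only [ffun, ξfun, if_neg h3, if_neg h4, h5] at hθ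
    have hh : h (2 * k) (Θ x) = e (Θ x) k := by
      simp only [hdef]
      rw [if_pos h6, h7]
    rw [← hh]
    exact hθ
  -- the winner's `u ∘ e`-code is White's sequence of declarations at stages `4k+3`
  have hU2 : ∀ x k, u (e (Θ x)) k = (Rfun σ h x (2 * k + 1)).1 := by
    intro x k
    have hθ := hΘ x (2 * (2 * k + 1) + 1)
    have h3 : ¬(2 * (2 * k + 1) + 1 = 0) := by omega
    have h4 : ¬((2 * (2 * k + 1) + 1) % 2 = 0) := by omega
    have h5 : (2 * (2 * k + 1) + 1) / 2 = 2 * k + 1 := by omega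
    have h6 : ¬((2 * k + 1) % 2 = 0) := by omega
    have h7 : (2 * k + 1) / 2 = k := by omega
    simp only [ffun, ξfun, if_neg h3, if_neg h4, h5] at hθ
    have hh : h (2 * k + 1) (Θ x) = u (e (Θ x)) k := by
      simp only [hdef]
      rw [if_neg h6, h7]
    rw [← hh]
    exact hθ
  set Φ : CantorSp → CantorSp := fun x k => (Rfun σ h x (2 * k)).1 with hΦdef
  set Ψ : CantorSp → CantorSp := fun x k => (Rfun σ h x (2 * k + 1)).1 with hΨdef
  have hΦe : ∀ x, e (Θ x) = Φ x := by
    intro x; funext k; exact hE x k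
  have hΨu : ∀ x, Ψ x = u (Φ x) := by
    intro x
    rw [← hΦe x]
    funext k
    exact (hU2 x k).symm
  have hcont : ∀ m : ℕ, Continuous fun x : CantorSp => (Rfun σ h x m).1 := by
    intro m
    have hfact : (fun x : CantorSp => (Rfun σ h x m).1)
        = (fun v : Fin (m + 1) → Fin 2 =>
            (σ.move (List.ofFn fun i : Fin (m + 1) => (v i, h (i : ℕ)))).1)
          ∘ (fun x : CantorSp => fun i : Fin (m + 1) => x (i : ℕ)) := rfl
    rw [hfact]
    exact continuous_of_discreteTopology.comp (continuous_pi fun i => continuous_apply _)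
  have hΦc : Continuous Φ := continuous_pi fun k => hcont (2 * k)
  have hΨc : Continuous Ψ := continuous_pi fun k => hcont (2 * k + 1)
  have hΦi : Function.Injective Φ := by
    intro x y hxy
    have hθ : Θ x = Θ y := einj (by rw [hΦe x, hΦe y, hxy])
    funext n
    induction n using Nat.strong_induction_on with
    | _ n ih =>
      have hfe : ffun σ h x (2 * n) = ffun σ h y (2 * n) := by
        match n with
        | 0 => simp [ffun]
        | Nat.succ m =>
          have h0 : ¬(2 * (m + 1) = 0) := by omega
          have h1 : (2 * (m + 1)) % 2 = 0 := by omega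
          have h2 : (2 * (m + 1)) / 2 - 1 = m := by omega
          have := hRcongr x y m (fun i hi => ih i (by omega))
          simp [ffun, h0, h1, h2, this]
      calc x n = ffun σ h x (2 * n) (Θ x) := (hbit x n).symm
        _ = ffun σ h y (2 * n) (Θ y) := by rw [hfe, hθ]
        _ = y n := hbit y n
  obtain ⟨x, hx⟩ := hu Φ Ψ hΦc hΦi hΨc
  exact hx (hΨu x)

/-- Theorem (paper Thm 12): if White has a winning strategy in `UG(2,κ)` then
`κ > 2^ℵ₀`. -/
theorem statement_7 (K : Type u) (hU : WhiteWinsUG (Fin 2) K) :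
    Cardinal.continuum.{u} < #K := by
  classical
  by_contra hcon
  rw [not_lt] at hcon
  have hK : #K ≤ #(ULift.{u} CantorSp) := by
    rw [Cardinal.mk_uLift, mk_cantorSp, Cardinal.lift_continuum]
    exact hcon
  obtain ⟨e₀⟩ := (Cardinal.le_def _ _).mp hK
  have einj : Function.Injective (fun a : K => (e₀ a).down) := by
    intro a b hab
    apply e₀.injective
    exact ULift.ext _ _ hab
  obtain ⟨σ, hσ⟩ := hU
  exact statement_7_aux σ hσ (fun a : K => (e₀ a).down) einj

end GamePaper
end

section
/- Let κ be an infinite cardinal number. White has a winning strategy in the cut-and-choose game UG(ℵ0,κ) if, and only if, White has a winning strategy in UG(2,κ). -/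
open Cardinal Set

namespace GamePaper

universe u

/-! ### Auxiliary machinery for statement_8 -/

section Machinery

variable {Λ : Type v} {K : Type u}

/-- The list of the first `n` values of a sequence. -/
def blist {α : Type*} (b : ℕ → α) (n : ℕ) : List α := List.ofFn fun i : Fin n => b i

@[simp] lemma blist_zero {α : Type*} (b : ℕ → α) : blist b 0 = [] := by simp [blist]

lemma blist_succ {α : Type*} (b : ℕ → α) (n : ℕ) :
    blist b (n + 1) = blist b n ++ [b n] := by
  show List.ofFn (fun i : Fin (n + 1) => b i) = _
  rw [List.ofFn_succ' (fun i : Fin (n + 1) => b i), List.concat_eq_append]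
  simp [blist]

@[simp] lemma blist_length {α : Type*} (b : ℕ → α) (n : ℕ) : (blist b n).length = n := by
  simp [blist]

lemma blist_getElem {α : Type*} (b : ℕ → α) (n t : ℕ) (h : t < (blist b n).length) :
    (blist b n)[t] = b t := by
  simp [blist]

lemma blist_ne_nil {α : Type*} (b : ℕ → α) (n : ℕ) : blist b (n + 1) ≠ [] := by
  rw [blist_succ]; simp

lemma blist_map {α β : Type*} (g : α → β) (b : ℕ → α) (n : ℕ) :
    (blist b n).map g = blist (fun k => g (b k)) n := by
  simp [blist, List.map_ofFn]; rfl

/-- The function White currently has on the table, after the Black moves `l`. -/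
def pending (σ : UGWhiteStrategy Λ K) : List (Λ × (K → Λ)) → K → Λ
  | [] => σ.first
  | a :: l => (σ.move (a :: l)).2

lemma pending_ne (σ : UGWhiteStrategy Λ K) (l : List (Λ × (K → Λ))) (h : l ≠ []) :
    pending σ l = (σ.move l).2 := by
  cases l with
  | nil => exact absurd rfl h
  | cons a l => rfl

/-- The cut sequence of the play induced by `σ` against the Black moves `b`. -/
def xiP (σ : UGWhiteStrategy Λ K) (b : ℕ → Λ × (K → Λ)) (m : ℕ) : Λ :=
  if m % 2 = 0 then (b (m / 2)).1 else (σ.move (blist b (m / 2 + 1))).1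

/-- The function sequence of the play induced by `σ` against the Black moves `b`. -/
def fP (σ : UGWhiteStrategy Λ K) (b : ℕ → Λ × (K → Λ)) (m : ℕ) : K → Λ :=
  if m % 2 = 0 then pending σ (blist b (m / 2)) else (b (m / 2)).2

lemma followsP (σ : UGWhiteStrategy Λ K) (b : ℕ → Λ × (K → Λ)) :
    UGWhiteFollows σ (xiP σ b) (fP σ b) := by
  constructor
  · show (if 0 % 2 = 0 then pending σ (blist b (0 / 2)) else (b (0 / 2)).2) = σ.first
    norm_num
    rfl
  · intro n
    have hl : (List.ofFn fun i : Fin (n + 1) => (xiP σ b (2 * (i : ℕ)), fP σ b (2 * (i : ℕ) + 1)))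
        = blist b (n + 1) := by
      unfold blist; congr 1; funext i
      have h1 : 2 * (i : ℕ) % 2 = 0 := by omega
      have h2 : 2 * (i : ℕ) / 2 = (i : ℕ) := by omega
      have h3 : (2 * (i : ℕ) + 1) % 2 = 1 := by omega
      have h4 : (2 * (i : ℕ) + 1) / 2 = (i : ℕ) := by omega
      simp [xiP, fP, h1, h2, h3, h4]
    rw [hl]
    have h3 : (2 * n + 1) % 2 = 1 := by omega
    have h4 : (2 * n + 1) / 2 = n := by omega
    have h5 : (2 * n + 2) % 2 = 0 := by omega
    have h6 : (2 * n + 2) / 2 = n + 1 := by omega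
    have e1 : xiP σ b (2 * n + 1) = (σ.move (blist b (n + 1))).1 := by
      rw [xiP, if_neg (by omega), h4]
    have e2 : fP σ b (2 * n + 2) = (σ.move (blist b (n + 1))).2 := by
      rw [fP, if_pos (by omega), h6, pending_ne σ _ (blist_ne_nil b n)]
    rw [e1, e2]

lemma survivor {σ : UGWhiteStrategy Λ K}
    (hσ : ∀ (ξ : ℕ → Λ) (f : ℕ → K → Λ), UGWhiteFollows σ ξ f → ∃ α : K, ∀ n : ℕ, f n α = ξ n)
    (b : ℕ → Λ × (K → Λ)) :
    ∃ α : K, (∀ n, pending σ (blist b n) α = (b n).1) ∧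
      (∀ n, (b n).2 α = (σ.move (blist b (n + 1))).1) := by
  obtain ⟨α, hα⟩ := hσ _ _ (followsP σ b)
  refine ⟨α, fun n => ?_, fun n => ?_⟩
  · have h := hα (2 * n)
    have h1 : 2 * n % 2 = 0 := by omega
    have h2 : 2 * n / 2 = n := by omega
    simpa [fP, xiP, h1, h2] using h
  · have h := hα (2 * n + 1)
    have h3 : (2 * n + 1) % 2 = 1 := by omega
    have h4 : (2 * n + 1) / 2 = n := by omega
    simpa [fP, xiP, h3, h4] using h

lemma fin2_cases (x : Fin 2) : x = 0 ∨ x = 1 := by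
  rcases x with ⟨(_ | _ | n), h⟩
  · exact Or.inl rfl
  · exact Or.inr rfl
  · omega

end Machinery
section Dir1

variable {K : Type u}

/-- Translate a Black binary move to a Black move of the `ℕ`-valued game. -/
def g2n {K : Type u} : Fin 2 × (K → Fin 2) → ℕ × (K → ℕ) :=
  fun m => ((if m.1 = 1 then 0 else 1), fun α => (m.2 α : ℕ))

/-- The indicator (in `Fin 2`) of the zero set of an `ℕ`-valued function. -/
def ind {K : Type u} (F : K → ℕ) : K → Fin 2 := fun α => if F α = 0 then 1 else 0

/-- The binary strategy simulating an `ℕ`-valued strategy. -/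
def sigma2 {K : Type u} (σ : UGWhiteStrategy ℕ K) : UGWhiteStrategy (Fin 2) K where
  first := ind σ.first
  move := fun L =>
    ((if (σ.move (L.map g2n)).1 = 1 then 1 else 0), ind (σ.move (L.map g2n)).2)

theorem dir1 (K : Type u) : WhiteWinsUG ℕ K → WhiteWinsUG (Fin 2) K := by
  rintro ⟨σ, hσ⟩
  refine ⟨sigma2 σ, ?_⟩
  intro ξ f hf
  obtain ⟨hf0, hfs⟩ := hf
  set b : ℕ → Fin 2 × (K → Fin 2) := fun n => (ξ (2 * n), f (2 * n + 1)) with hbdef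
  obtain ⟨α, h1, h2⟩ := survivor hσ (fun n => g2n (b n))
  have hlist : ∀ n, (List.ofFn fun i : Fin (n + 1) => (ξ (2 * (i : ℕ)), f (2 * (i : ℕ) + 1)))
      = blist b (n + 1) := fun n => rfl
  have hmap : ∀ k, (blist b k).map g2n = blist (fun n => g2n (b n)) k :=
    fun k => blist_map g2n b k
  have feven : ∀ n, f (2 * n) = ind (pending σ (blist (fun n => g2n (b n)) n)) := by
    intro n
    cases n with
    | zero =>
        show f 0 = _
        rw [hf0, blist_zero]
        rfl
    | succ n =>
        have h : f (2 * n + 2) = ((sigma2 σ).move (List.ofFn fun i : Fin (n + 1) =>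
            (ξ (2 * (i : ℕ)), f (2 * (i : ℕ) + 1)))).2 := congrArg Prod.snd (hfs n)
        rw [hlist n] at h
        show f (2 * (n + 1)) = _
        rw [show 2 * (n + 1) = 2 * n + 2 by ring, h]
        show ind (σ.move ((blist b (n + 1)).map g2n)).2 = _
        rw [hmap, ← pending_ne σ _ (blist_ne_nil _ n)]
  refine ⟨α, fun m => ?_⟩
  obtain ⟨n, rfl | rfl⟩ : ∃ n, m = 2 * n ∨ m = 2 * n + 1 := ⟨m / 2, by omega⟩
  · -- even round
    have hp := h1 n
    rw [feven n]
    have hξ : ξ (2 * n) = (b n).1 := rfl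
    rw [hξ]
    have hp' : pending σ (blist (fun n => g2n (b n)) n) α
        = (if (b n).1 = 1 then 0 else 1 : ℕ) := hp
    rcases fin2_cases ((b n).1) with h | h
    · rw [h] at hp' ⊢
      rw [if_neg (by decide)] at hp'
      show (if pending σ (blist (fun n => g2n (b n)) n) α = 0 then (1 : Fin 2) else 0) = 0
      rw [hp']
      norm_num
    · rw [h] at hp' ⊢
      rw [if_pos rfl] at hp'
      show (if pending σ (blist (fun n => g2n (b n)) n) α = 0 then (1 : Fin 2) else 0) = 1
      rw [hp']
      norm_num
  · -- odd round
    have hq := h2 n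
    have hξ : ξ (2 * n + 1) = (sigma2 σ |>.move (blist b (n + 1))).1 :=
      congrArg Prod.fst (hfs n)
    have hfodd : f (2 * n + 1) = (b n).2 := rfl
    rw [hξ, hfodd]
    show (b n).2 α = (if (σ.move ((blist b (n + 1)).map g2n)).1 = 1 then 1 else 0)
    rw [hmap]
    have hq' : (((b n).2 α : Fin 2) : ℕ) = (σ.move (blist (fun n => g2n (b n)) (n + 1))).1 := hq
    rcases fin2_cases ((b n).2 α) with h | h
    · rw [h] at hq'
      have hx : (σ.move (blist (fun n => g2n (b n)) (n + 1))).1 = 0 := by simpa using hq'.symm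
      rw [h, hx]
      norm_num
    · rw [h] at hq'
      have hx : (σ.move (blist (fun n => g2n (b n)) (n + 1))).1 = 1 := by simpa using hq'.symm
      rw [h, hx]
      norm_num

end Dir1
section Dir2

open Classical in
/-- noop to allow classical instances below -/
lemma _classical_marker : True := trivial

variable {K : Type u}

/-- The constantly-`0` binary function. -/
def zf {K : Type u} : K → Fin 2 := fun _ => 0

/-- A dummy fabricated Black move. -/
def zmove {K : Type u} : Fin 2 × (K → Fin 2) := (0, zf)

/-- The virtual sequence of pending White functions obtained by continuing with
dummy Black moves. -/
def qseq {K : Type u} (τ : UGWhiteStrategy (Fin 2) K)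
    (Fl : List (Fin 2 × (K → Fin 2))) (i : ℕ) : K → Fin 2 :=
  pending τ (Fl ++ List.replicate i zmove)

open Classical in
/-- The `ℕ`-valued function White derives from the virtual sequence. -/
noncomputable def Fnext {K : Type u} (τ : UGWhiteStrategy (Fin 2) K)
    (Fl : List (Fin 2 × (K → Fin 2))) : K → ℕ :=
  fun α => if h : ∃ i, qseq τ Fl i α = 1 then Nat.find h else 0

/-- Indicator (in `Fin 2`) of the fiber of an `ℕ`-valued function. -/
def indh {K : Type u} (h : K → ℕ) (j : ℕ) : K → Fin 2 := fun α => if h α = j then 1 else 0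

/-- The fabricated Black moves used to pin down Black's real function `h`. -/
def pinList {K : Type u} (h : K → ℕ) (n : ℕ) : List (Fin 2 × (K → Fin 2)) :=
  (List.range n).map fun j => ((0 : Fin 2), indh h j)

/-- The fabricated Black moves used to decode Black's real cut `v`. -/
def burst1 {K : Type u} (v : ℕ) : List (Fin 2 × (K → Fin 2)) :=
  List.replicate v zmove ++ [((1 : Fin 2), zf)]

/-- The cut that `τ` plays against the `j`-th pinning move. -/
def Ecut {K : Type u} (τ : UGWhiteStrategy (Fin 2) K)
    (Fl1 : List (Fin 2 × (K → Fin 2))) (h : K → ℕ) (j : ℕ) : Fin 2 :=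
  (τ.move (Fl1 ++ pinList h (j + 1))).1

open Classical in
/-- The first pinning stage accepted by `τ`. -/
noncomputable def jstar {K : Type u} (τ : UGWhiteStrategy (Fin 2) K)
    (Fl1 : List (Fin 2 × (K → Fin 2))) (h : K → ℕ) : ℕ :=
  if hE : ∃ j, Ecut τ Fl1 h j = 1 then Nat.find hE else 0

/-- The fabricated binary Black moves generated by one real round. -/
noncomputable def step {K : Type u} (τ : UGWhiteStrategy (Fin 2) K)
    (Fl : List (Fin 2 × (K → Fin 2))) (a : ℕ × (K → ℕ)) : List (Fin 2 × (K → Fin 2)) :=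
  (Fl ++ burst1 a.1) ++ pinList a.2 (jstar τ (Fl ++ burst1 a.1) a.2 + 1)

/-- Fabrication of the whole binary Black history, on reversed lists. -/
noncomputable def FABr {K : Type u} (τ : UGWhiteStrategy (Fin 2) K) :
    List (ℕ × (K → ℕ)) → List (Fin 2 × (K → Fin 2))
  | [] => []
  | a :: r => step τ (FABr τ r) a

/-- Fabrication of the whole binary Black history. -/
noncomputable def FAB {K : Type u} (τ : UGWhiteStrategy (Fin 2) K)
    (L : List (ℕ × (K → ℕ))) : List (Fin 2 × (K → Fin 2)) :=
  FABr τ L.reverse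

lemma FAB_nil {K : Type u} (τ : UGWhiteStrategy (Fin 2) K) : FAB τ [] = [] := rfl

lemma FAB_concat {K : Type u} (τ : UGWhiteStrategy (Fin 2) K)
    (l : List (ℕ × (K → ℕ))) (a : ℕ × (K → ℕ)) :
    FAB τ (l ++ [a]) = step τ (FAB τ l) a := by
  rw [FAB, List.reverse_append]
  rfl

/-- The `ℕ`-valued strategy simulating a binary strategy. -/
noncomputable def sigmaN {K : Type u} (τ : UGWhiteStrategy (Fin 2) K) :
    UGWhiteStrategy ℕ K where
  first := Fnext τ []
  move := fun L =>
    (jstar τ (FAB τ L.dropLast ++ burst1 ((L.getLastD (0, fun _ => 0)).1))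
        ((L.getLastD (0, fun _ => 0)).2),
     Fnext τ (step τ (FAB τ L.dropLast) (L.getLastD (0, fun _ => 0))))

lemma sigmaN_move_concat {K : Type u} (τ : UGWhiteStrategy (Fin 2) K)
    (l : List (ℕ × (K → ℕ))) (a : ℕ × (K → ℕ)) :
    (sigmaN τ).move (l ++ [a]) =
      (jstar τ (FAB τ l ++ burst1 a.1) a.2, Fnext τ (step τ (FAB τ l) a)) := by
  simp [sigmaN, List.dropLast_concat, List.getLastD_concat]

/-- Any prefix-extension fact: elements of a prefix agree. -/
lemma prefix_getElem {α : Type*} {l₁ l₂ : List α} (h : l₁ <+: l₂) (t : ℕ)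
    (ht : t < l₁.length) :
    l₂[t]'(lt_of_lt_of_le ht h.length_le) = l₁[t] := by
  obtain ⟨r, rfl⟩ := h
  exact List.getElem_append_left ht

/-- `τ` must eventually accept a pinning stage. -/
lemma pin_exists {K : Type u} (τ : UGWhiteStrategy (Fin 2) K)
    (hτ : ∀ (ξ : ℕ → Fin 2) (f : ℕ → K → Fin 2),
      UGWhiteFollows τ ξ f → ∃ α : K, ∀ n : ℕ, f n α = ξ n)
    (Fl1 : List (Fin 2 × (K → Fin 2))) (h : K → ℕ) :
    ∃ j, Ecut τ Fl1 h j = 1 := by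
  by_contra hno
  push_neg at hno
  set T1 := Fl1.length with hT1
  set bb' : ℕ → Fin 2 × (K → Fin 2) :=
    fun t => if ht : t < T1 then Fl1[t] else ((0 : Fin 2), indh h (t - T1)) with hbb'
  obtain ⟨β, hA, hB⟩ := survivor hτ bb'
  have hpref : ∀ j, blist bb' (T1 + j) = Fl1 ++ pinList h j := by
    intro j
    apply List.ext_getElem (by simp [pinList, hT1])
    intro t h1 h2
    rw [blist_getElem]
    by_cases ht : t < T1
    · rw [hbb']
      simp only [dif_pos ht]
      rw [List.getElem_append_left ht]
    · have ht2 : T1 ≤ t := le_of_not_gt ht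
      rw [hbb']
      simp only [dif_neg ht]
      rw [List.getElem_append_right ht2]
      simp [pinList, hT1]
  have key : ∀ j, indh h j β = Ecut τ Fl1 h j := by
    intro j
    have hb := hB (T1 + j)
    have hbbval : bb' (T1 + j) = ((0 : Fin 2), indh h j) := by
      rw [hbb']
      simp only [dif_neg (by omega : ¬ T1 + j < T1), Nat.add_sub_cancel_left]
    have hlst : blist bb' (T1 + j + 1) = Fl1 ++ pinList h (j + 1) := by
      rw [show T1 + j + 1 = T1 + (j + 1) by omega]
      exact hpref (j + 1)
    rw [hbbval, hlst] at hb
    exact hb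
  have : ∀ j, h β ≠ j := by
    intro j hj
    have h0 : Ecut τ Fl1 h j = 0 := by
      rcases fin2_cases (Ecut τ Fl1 h j) with h' | h'
      · exact h'
      · exact absurd h' (hno j)
    have := key j
    rw [h0] at this
    rw [indh] at this
    rw [if_pos hj] at this
    exact absurd this (by decide)
  exact this (h β) rfl

end Dir2
theorem dir2 (K : Type u) : WhiteWinsUG (Fin 2) K → WhiteWinsUG ℕ K := by
  rintro ⟨τ, hτ⟩
  refine ⟨sigmaN τ, ?_⟩
  intro ξ f hf
  obtain ⟨hf0, hfs⟩ := hf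
  set b : ℕ → ℕ × (K → ℕ) := fun n => (ξ (2 * n), f (2 * n + 1)) with hbdef
  set Cl : ℕ → List (Fin 2 × (K → Fin 2)) := fun m => FAB τ (blist b m) with hCl
  have Cl0 : Cl 0 = [] := by rw [hCl]; simp only; rw [blist_zero, FAB_nil]
  have Cl_succ : ∀ m, Cl (m + 1) = step τ (Cl m) (b m) := by
    intro m
    rw [hCl]; simp only
    rw [blist_succ, FAB_concat]
  have len_step : ∀ m, (Cl m).length < (Cl (m + 1)).length := by
    intro m
    rw [Cl_succ m]
    simp [step, burst1, pinList]
  have len_ge : ∀ m, m ≤ (Cl m).length := by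
    intro m
    induction m with
    | zero => exact Nat.zero_le _
    | succ m ih => have := len_step m; omega
  have pref_succ : ∀ m, Cl m <+: Cl (m + 1) := by
    intro m
    rw [Cl_succ m, step, List.append_assoc]
    exact List.prefix_append _ _
  have pref_mono : ∀ {m m' : ℕ}, m ≤ m' → Cl m <+: Cl m' := by
    intro m m' h
    induction h with
    | refl => exact List.prefix_refl _
    | step h ih => exact ih.trans (pref_succ _)
  set bb : ℕ → Fin 2 × (K → Fin 2) := fun t => (Cl (t + 1)).getD t zmove with hbb
  have bb_lt : ∀ t, t < (Cl (t + 1)).length :=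
    fun t => lt_of_lt_of_le (Nat.lt_succ_self t) (len_ge (t + 1))
  have bb_eq : ∀ {L : List (Fin 2 × (K → Fin 2))} {m t : ℕ},
      L <+: Cl m → ∀ ht : t < L.length, bb t = L[t] := by
    intro L m t hL ht
    have h2 : Cl (t + 1) <+: Cl (max (t + 1) m) := pref_mono (le_max_left _ _)
    have h3 : L <+: Cl (max (t + 1) m) := hL.trans (pref_mono (le_max_right _ _))
    rw [hbb]; simp only
    rw [List.getD_eq_getElem _ _ (bb_lt t)]
    exact (prefix_getElem h2 t (bb_lt t)).symm.trans (prefix_getElem h3 t ht)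
  have blist_bb : ∀ {L : List (Fin 2 × (K → Fin 2))} {m : ℕ},
      L <+: Cl m → blist bb L.length = L := by
    intro L m hL
    apply List.ext_getElem (by simp)
    intro t h1 h2
    rw [blist_getElem]
    exact bb_eq hL h2
  obtain ⟨α, hA, hB⟩ := survivor hτ bb
  have main : ∀ m, f (2 * m) α = ξ (2 * m) ∧ f (2 * m + 1) α = ξ (2 * m + 1) := by
    intro m
    have hFABCl : FAB τ (blist b m) = Cl m := by rw [hCl]
    set v : ℕ := (b m).1 with hv
    set hm : K → ℕ := (b m).2 with hhm
    set T : ℕ := (Cl m).length with hT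
    set Fl1 : List (Fin 2 × (K → Fin 2)) := Cl m ++ burst1 v with hFl1
    have hEx : ∃ j, Ecut τ Fl1 hm j = 1 := pin_exists τ hτ Fl1 hm
    set js : ℕ := Nat.find hEx with hjs
    have hjseq : jstar τ Fl1 hm = js := by rw [jstar, dif_pos hEx]
    have hClsucc : Cl (m + 1) = Fl1 ++ pinList hm (js + 1) := by
      rw [Cl_succ m, step, ← hv, ← hhm, ← hFl1, hjseq]
    -- decode phase
    have hrep_pref : ∀ i, i ≤ v → Cl m ++ List.replicate i zmove <+: Cl (m + 1) := by
      intro i hi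
      refine ⟨List.replicate (v - i) zmove ++ ([((1 : Fin 2), zf)] ++ pinList hm (js + 1)), ?_⟩
      rw [hClsucc, hFl1, burst1, show v = i + (v - i) by omega]
      rw [List.replicate_add]
      simp only [List.append_assoc]
      rw [show i + (v - i) - i = v - i by omega]
    have hlenrep : ∀ i : ℕ, (Cl m ++ List.replicate i zmove).length = T + i := by
      intro i; simp [hT]
    have hq0 : ∀ i, i < v → qseq τ (Cl m) i α = 0 := by
      intro i hi
      have h1 := hA (T + i)
      have hls : blist bb (T + i) = Cl m ++ List.replicate i zmove := by
        have h := blist_bb (hrep_pref i (le_of_lt hi))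
        rwa [hlenrep i] at h
      have hval : bb (T + i) = zmove := by
        have hp := hrep_pref (i + 1) hi
        have hlen : T + i < (Cl m ++ List.replicate (i + 1) zmove).length := by
          rw [hlenrep]; omega
        have h' := bb_eq hp hlen
        rw [h', List.getElem_append_right (by omega : (Cl m).length ≤ T + i),
          List.getElem_replicate]
      rw [hls, hval] at h1
      exact h1
    have hq1 : qseq τ (Cl m) v α = 1 := by
      have h1 := hA (T + v)
      have hls : blist bb (T + v) = Cl m ++ List.replicate v zmove := by
        have h := blist_bb (hrep_pref v le_rfl)
        rwa [hlenrep v] at h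
      have hval : bb (T + v) = ((1 : Fin 2), zf) := by
        have h'' : Fl1 = (Cl m ++ List.replicate v zmove) ++ [((1 : Fin 2), zf)] := by
          rw [hFl1, burst1, List.append_assoc]
        have hp : (Cl m ++ List.replicate v zmove) ++ [((1 : Fin 2), zf)] <+: Cl (m + 1) := by
          rw [← h'']; exact ⟨_, hClsucc.symm⟩
        have hlen : T + v < ((Cl m ++ List.replicate v zmove) ++ [((1 : Fin 2), zf)]).length := by
          simp [hT]
        have h' := bb_eq hp hlen
        rw [h', List.getElem_append_right (le_of_eq (hlenrep v) :
          (Cl m ++ List.replicate v zmove).length ≤ T + v)]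
        simp [hlenrep]
      rw [hls, hval] at h1
      exact h1
    -- the even-round function
    have hfe : f (2 * m) = Fnext τ (Cl m) := by
      cases m with
      | zero =>
          rw [hf0, Cl0]
          rfl
      | succ m' =>
          have h : f (2 * m' + 2) = ((sigmaN τ).move (blist b (m' + 1))).2 :=
            congrArg Prod.snd (hfs m')
          rw [blist_succ, sigmaN_move_concat] at h
          have hstep : step τ (FAB τ (blist b m')) (b m') = Cl (m' + 1) := by
            rw [Cl_succ m', hCl]
          rw [hstep] at h
          rw [show 2 * (m' + 1) = 2 * m' + 2 by ring, h]
    have heven : f (2 * m) α = ξ (2 * m) := by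
      have hxiv : ξ (2 * m) = v := rfl
      rw [hfe, hxiv, Fnext]
      have hex2 : ∃ i, qseq τ (Cl m) i α = 1 := ⟨v, hq1⟩
      rw [dif_pos hex2, Nat.find_eq_iff]
      refine ⟨hq1, fun i hi hcon => ?_⟩
      have := (hq0 i hi).symm.trans hcon
      exact absurd this (by decide)
    -- pin phase
    have T1len : Fl1.length = T + v + 1 := by
      rw [hFl1]; simp [burst1, hT]; omega
    have hpinpre : ∀ j, j ≤ js → Fl1 ++ pinList hm (j + 1) <+: Cl (m + 1) := by
      intro j hj
      rw [hClsucc]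
      have hpl : pinList hm (j + 1) <+: pinList hm (js + 1) := by
        rw [pinList, pinList]
        refine List.IsPrefix.map _ ?_
        rw [show j + 1 = min (j + 1) (js + 1) by omega, ← List.take_range]
        exact List.take_prefix _ _
      obtain ⟨r, hr⟩ := hpl
      exact ⟨r, by rw [List.append_assoc, hr]⟩
    have hpin : ∀ j, j ≤ js → indh hm j α = Ecut τ Fl1 hm j := by
      intro j hj
      have h2 := hB (Fl1.length + j)
      have hls : blist bb (Fl1.length + j + 1) = Fl1 ++ pinList hm (j + 1) := by
        have h := blist_bb (hpinpre j hj)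
        rwa [show (Fl1 ++ pinList hm (j + 1)).length = Fl1.length + j + 1 by
          simp [pinList]; omega] at h
      have hval : bb (Fl1.length + j) = ((0 : Fin 2), indh hm j) := by
        have hlen : Fl1.length + j < (Fl1 ++ pinList hm (j + 1)).length := by
          simp [pinList]
        have h' := bb_eq (hpinpre j hj) hlen
        rw [h', List.getElem_append_right (by omega : Fl1.length ≤ Fl1.length + j)]
        simp [pinList]
      rw [hls, hval] at h2
      exact h2
    have hodd : f (2 * m + 1) α = ξ (2 * m + 1) := by
      have hxi : ξ (2 * m + 1) = ((sigmaN τ).move (blist b (m + 1))).1 :=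
        congrArg Prod.fst (hfs m)
      rw [blist_succ, sigmaN_move_concat] at hxi
      have hxi2 : ξ (2 * m + 1) = js := by
        rw [hxi]
        show jstar τ (FAB τ (blist b m) ++ burst1 (b m).1) (b m).2 = js
        rw [hFABCl, ← hv, ← hhm, ← hFl1, hjseq]
      have hmα : hm α = js := by
        have h := hpin js le_rfl
        rw [Nat.find_spec hEx] at h
        by_contra hne
        rw [indh, if_neg hne] at h
        exact absurd h (by decide)
      have hfo : f (2 * m + 1) = hm := rfl
      rw [hfo, hxi2, hmα]
    exact ⟨heven, hodd⟩
  refine ⟨α, fun m => ?_⟩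
  obtain ⟨n, rfl | rfl⟩ : ∃ n, m = 2 * n ∨ m = 2 * n + 1 := ⟨m / 2, by omega⟩
  · exact (main n).1
  · exact (main n).2

/-- Theorem (paper Thm 13): for an infinite cardinal `κ`, White has a winning strategy
in `UG(ℵ₀,κ)` iff White has a winning strategy in `UG(2,κ)`. -/
theorem statement_8 (K : Type u) [Infinite K] :
    WhiteWinsUG ℕ K ↔ WhiteWinsUG (Fin 2) K := by
  exact ⟨dir1 K, dir2 K⟩

end GamePaper
end
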